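/- arXiv:1511.04061 — 4 statements merged into one kernel-verified Lean document; each statement's English description precedes it below -/
import Mathlib

section
/- Let F : K^d → K^d be a nonzero additive polynomial mapping over K and let 1 ≤ s < s_+ be real numbers. Then for all sufficiently large n (depending on s, s_+ and F), every monomial occurring in any component of F^{∘n} with total degree at most s^n has coefficient of height h_K at most s_+^n. -/
open MvPolynomial Filter

noncomputable section

/-- Data modelling the set of closed points of a smooth projective geometrically
connected curve `C` over a finite field, for its function field `K = K(C)`:
for each closed point `v` we record the normalized valuation `ord v` of `K` at `v`
and the cardinality `resCard v` of the (finite) residue field `k(v)`. -/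
structure PlaceData (K : Type*) [Field K] where
  Pt : Type
  ord : Pt → K → ℤ
  resCard : Pt → ℕ
  two_le_resCard : ∀ v, 2 ≤ resCard v
  ord_one : ∀ v, ord v 1 = 0
  ord_mul : ∀ v (a b : K), a ≠ 0 → b ≠ 0 → ord v (a * b) = ord v a + ord v b
  min_le_ord_add : ∀ v (a b : K), a ≠ 0 → b ≠ 0 → a + b ≠ 0 →
    min (ord v a) (ord v b) ≤ ord v (a + b)
  finite_mulSupport : ∀ a : K, a ≠ 0 → {v | ord v a ≠ 0}.Finite
  exists_finite_residue_reps : ∀ v, ∃ R : Finset K, ∀ a : K, (a = 0 ∨ 0 ≤ ord v a) →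
      ∃ b ∈ R, a - b = 0 ∨ 0 < ord v (a - b)
  product_formula : ∀ a : K, a ≠ 0 →
      ∑ᶠ v, (ord v a : ℝ) * Real.log (resCard v) = 0

variable {K : Type*} [Field K]

open Classical in
/-- `ord_v^-(a) = min(ord_v(a), 0)`, with the convention `ord_v^-(0) = 0`
(coming from `ord_v(0) = +∞`). -/
def PlaceData.ordMinus (Pl : PlaceData K) (v : Pl.Pt) (a : K) : ℤ :=
  if a = 0 then 0 else min (Pl.ord v a) 0

/-- The affine logarithmic Weil height of an element of `K`. -/
def PlaceData.h1 (Pl : PlaceData K) (a : K) : ℝ :=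
  -∑ᶠ v, (Pl.ordMinus v a : ℝ) * Real.log (Pl.resCard v)

/-- The affine logarithmic Weil height
`h_K(a_1, …, a_d) = -∑_v min_j ord_v^-(a_j) · log |k(v)|` of a point of `K^d`
(written via `-min_j ord_v^-(a_j) = max_j (-ord_v^-(a_j)) = sup_j (-ord_v^-(a_j)).toNat`). -/
def PlaceData.h (Pl : PlaceData K) {d : ℕ} (x : Fin d → K) : ℝ :=
  ∑ᶠ v, ((Finset.univ.sup fun j => (-(Pl.ordMinus v (x j))).toNat : ℕ) : ℝ) *
    Real.log (Pl.resCard v)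

/-- Iterates `F^{∘n}` of a polynomial self-map of affine `d`-space,
at the level of coordinate polynomials. -/
def polyIter {R : Type*} [CommSemiring R] {d : ℕ} (F : Fin d → MvPolynomial (Fin d) R) :
    ℕ → Fin d → MvPolynomial (Fin d) R
  | 0 => fun j => X j
  | n + 1 => fun j => bind₁ (polyIter F n) (F j)

/-- The (total) degree of a polynomial map. -/
def polyDeg {R : Type*} [CommSemiring R] {d e : ℕ} (F : Fin e → MvPolynomial (Fin d) R) : ℕ :=
  Finset.univ.sup fun j => (F j).totalDegree

/-- Evaluation of a polynomial map at a point. -/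
def polyMapEval {R : Type*} [CommSemiring R] {d e : ℕ} (F : Fin e → MvPolynomial (Fin d) R)
    (x : Fin d → R) : Fin e → R :=
  fun j => eval x (F j)

/-- A polynomial is additive (in characteristic `p`) iff it is of the form
`∑_i ∑_k a_{i,k} X_k^{p^i}`. -/
def IsAddPoly (p : ℕ) {R : Type*} [CommSemiring R] {d : ℕ} (f : MvPolynomial (Fin d) R) : Prop :=
  ∃ (r : ℕ) (a : ℕ → Fin d → R),
    f = ∑ i ∈ Finset.range (r + 1), ∑ k : Fin d, C (a i k) * X k ^ p ^ i

/-- The additive polynomial self-map `A_0 + A_1 τ + ⋯ + A_r τ^r` of `𝔾_a^d`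
attached to matrices `A_0, …, A_r`. -/
def addPolyOf {R : Type*} [CommSemiring R] (p d r : ℕ) (A : ℕ → Matrix (Fin d) (Fin d) R) :
    Fin d → MvPolynomial (Fin d) R :=
  fun j => ∑ i ∈ Finset.range (r + 1), ∑ k : Fin d, C (A i j k) * X k ^ p ^ i

/-- The dynamic degree `δ = lim_n (deg F^{∘n})^{1/n}` (the limit exists and
equals this `limsup`). -/
def dynDeg {R : Type*} [CommSemiring R] {d : ℕ} (F : Fin d → MvPolynomial (Fin d) R) : ℝ :=
  limsup (fun n : ℕ => ((polyDeg (polyIter F n) : ℝ)) ^ ((n : ℝ)⁻¹)) atTop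

/-- A point is preperiodic when its forward orbit is finite. -/
def Preperiodic {α : Type*} (f : α → α) (x : α) : Prop :=
  (Set.range fun n : ℕ => f^[n] x).Finite

/-- The vanishing ideal of a subset `H ⊆ K^d`. -/
def vanishingIdealOf {d : ℕ} (H : Set (Fin d → K)) : Ideal (MvPolynomial (Fin d) K) :=
  ⨅ x ∈ H, RingHom.ker (eval x)

/-- `H` is (the set of `K`-points of) a connected algebraic subgroup of the vector group
`𝔾_a^d`: it is Zariski closed, a subgroup of `(K^d, +)`, and connected
(equivalently irreducible, encoded by primality of its vanishing ideal). -/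
def IsConnAlgSubgroup {d : ℕ} (H : Set (Fin d → K)) : Prop :=
  (∃ S : Set (MvPolynomial (Fin d) K), H = {x | ∀ f ∈ S, eval x f = 0}) ∧
  (0 : Fin d → K) ∈ H ∧
  (∀ x ∈ H, ∀ y ∈ H, x + y ∈ H) ∧
  (∀ x ∈ H, -x ∈ H) ∧
  (vanishingIdealOf H).IsPrime

/-- The dimension of the linear span of the products of the functions
`Ψ_{i,n,j} = (m_i ∘ F^{∘n})^j`, `1 ≤ i ≤ d`, `0 ≤ n < N`, `0 ≤ j < L`, over subsets
of the index set. -/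
def satRank {d : ℕ} (F : Fin d → MvPolynomial (Fin d) K) (L N : ℕ) : ℕ :=
  Module.finrank K (Submodule.span K (Set.range fun s : Finset (Fin d × Fin N × Fin L) =>
    ∏ t ∈ s, (polyIter F (t.2.1 : ℕ) t.1) ^ ((t.2.2 : ℕ))))

/-- The saturation degree `κ(F)`. -/
def satDeg {d : ℕ} (F : Fin d → MvPolynomial (Fin d) K) : ℝ :=
  sSup {c : ℝ | 0 < c ∧ ∃ L : ℕ, ∀ᶠ N : ℕ in atTop,
    (c ^ (d * N) : ℝ) < (satRank F L N : ℝ)}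


/-! ### Auxiliary machinery for the proof -/

section Aux

variable {K : Type*} [Field K]

theorem PlaceData.ordMinus_nonpos (Pl : PlaceData K) (v : Pl.Pt) (a : K) :
    Pl.ordMinus v a ≤ 0 := by
  unfold PlaceData.ordMinus
  split
  · exact le_refl 0
  · exact min_le_right _ _

theorem PlaceData.ordMinus_zero' (Pl : PlaceData K) (v : Pl.Pt) :
    Pl.ordMinus v 0 = 0 := if_pos rfl

theorem PlaceData.ordMinus_one' (Pl : PlaceData K) (v : Pl.Pt) :
    Pl.ordMinus v 1 = 0 := by
  unfold PlaceData.ordMinus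
  rw [if_neg one_ne_zero, Pl.ord_one v]
  simp

theorem PlaceData.ord_ne_zero_of_ordMinus_ne_zero (Pl : PlaceData K) (v : Pl.Pt) (a : K)
    (h : Pl.ordMinus v a ≠ 0) : Pl.ord v a ≠ 0 := by
  unfold PlaceData.ordMinus at h
  by_cases ha : a = 0
  · rw [if_pos ha] at h; exact absurd rfl h
  · rw [if_neg ha] at h
    intro h0
    rw [h0] at h
    simp at h

theorem PlaceData.min_le_ordMinus_add (Pl : PlaceData K) (v : Pl.Pt) (a b : K) :
    min (Pl.ordMinus v a) (Pl.ordMinus v b) ≤ Pl.ordMinus v (a + b) := by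
  by_cases ha : a = 0
  · rw [ha, zero_add, Pl.ordMinus_zero']
    exact min_le_right _ _
  by_cases hb : b = 0
  · rw [hb, add_zero, Pl.ordMinus_zero']
    exact min_le_left _ _
  by_cases hab : a + b = 0
  · rw [hab, Pl.ordMinus_zero']
    exact le_trans (min_le_left _ _) (Pl.ordMinus_nonpos v a)
  · have h := Pl.min_le_ord_add v a b ha hb hab
    unfold PlaceData.ordMinus
    rw [if_neg ha, if_neg hb, if_neg hab]
    omega

theorem PlaceData.add_le_ordMinus_mul (Pl : PlaceData K) (v : Pl.Pt) (a b : K) :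
    Pl.ordMinus v a + Pl.ordMinus v b ≤ Pl.ordMinus v (a * b) := by
  by_cases ha : a = 0
  · rw [ha, zero_mul, Pl.ordMinus_zero', zero_add]
    exact Pl.ordMinus_nonpos v b
  by_cases hb : b = 0
  · rw [hb, mul_zero, Pl.ordMinus_zero', add_zero]
    exact Pl.ordMinus_nonpos v a
  · have hab : a * b ≠ 0 := mul_ne_zero ha hb
    have h := Pl.ord_mul v a b ha hb
    unfold PlaceData.ordMinus
    rw [if_neg ha, if_neg hb, if_neg hab, h]
    omega

theorem PlaceData.ordMinus_sum_le {ι : Type*} (Pl : PlaceData K) (v : Pl.Pt)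
    (S : Finset ι) (f : ι → K) (B : ℤ) (hB : B ≤ 0)
    (h : ∀ t ∈ S, B ≤ Pl.ordMinus v (f t)) :
    B ≤ Pl.ordMinus v (Finset.sum S f) := by
  refine Finset.sum_induction f (fun x => B ≤ Pl.ordMinus v x) ?_ ?_ h
  · intro x y hx hy
    refine le_trans ?_ (Pl.min_le_ordMinus_add v x y)
    exact le_min hx hy
  · show B ≤ Pl.ordMinus v 0
    rw [Pl.ordMinus_zero']; exact hB

/-- The total degree of an exponent multi-index. -/
def mdeg {d : ℕ} (m : Fin d →₀ ℕ) : ℕ := m.sum fun _ e => e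

theorem mdeg_add {d : ℕ} (m₁ m₂ : Fin d →₀ ℕ) : mdeg (m₁ + m₂) = mdeg m₁ + mdeg m₂ :=
  Finsupp.sum_add_index' (fun _ => rfl) (fun _ _ _ => rfl)

theorem one_le_mdeg {d : ℕ} (m : Fin d →₀ ℕ) (hm : m ≠ 0) : 1 ≤ mdeg m := by
  rcases Finsupp.ne_iff.mp hm with ⟨j, hj⟩
  have hj' : j ∈ m.support := Finsupp.mem_support_iff.mpr (by simpa using hj)
  have h : m j ≤ ∑ x ∈ m.support, m x :=
    Finset.single_le_sum (f := fun a => m a) (fun i _ => Nat.zero_le _) hj'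
  have hj0 : m j ≠ 0 := by simpa using hj
  simp only [mdeg, Finsupp.sum]
  omega

/-- The weighted Gauss bound: every coefficient `c` of `f` at a monomial of total degree `e`
satisfies `-ord_v^-(c) ≤ Cst * e`. -/
def Wb {d : ℕ} (Pl : PlaceData K) (v : Pl.Pt) (Cst : ℤ) (f : MvPolynomial (Fin d) K) : Prop :=
  ∀ m : Fin d →₀ ℕ, -(Pl.ordMinus v (coeff m f)) ≤ Cst * (mdeg m : ℤ)

theorem Wb_X {d : ℕ} (Pl : PlaceData K) (v : Pl.Pt) {Cst : ℤ} (hC : 0 ≤ Cst) (j : Fin d) :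
    Wb Pl v Cst (X j) := by
  intro m
  rw [coeff_X']
  split_ifs with h
  · rw [Pl.ordMinus_one']
    simpa using mul_nonneg hC (Int.natCast_nonneg (mdeg m))
  · rw [Pl.ordMinus_zero']
    simpa using mul_nonneg hC (Int.natCast_nonneg (mdeg m))

theorem Wb_one {d : ℕ} (Pl : PlaceData K) (v : Pl.Pt) {Cst : ℤ} (hC : 0 ≤ Cst) :
    Wb Pl v Cst (1 : MvPolynomial (Fin d) K) := by
  intro m
  rw [coeff_one]
  split_ifs with h
  · rw [Pl.ordMinus_one']
    simpa using mul_nonneg hC (Int.natCast_nonneg (mdeg m))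
  · rw [Pl.ordMinus_zero']
    simpa using mul_nonneg hC (Int.natCast_nonneg (mdeg m))

theorem Wb_sum {ι : Type*} {d : ℕ} (Pl : PlaceData K) (v : Pl.Pt) {Cst : ℤ} (hC : 0 ≤ Cst)
    (S : Finset ι) (f : ι → MvPolynomial (Fin d) K) (h : ∀ t ∈ S, Wb Pl v Cst (f t)) :
    Wb Pl v Cst (∑ t ∈ S, f t) := by
  intro m
  rw [coeff_sum]
  have hB : -(Cst * (mdeg m : ℤ)) ≤ 0 :=
    neg_nonpos.mpr (mul_nonneg hC (Int.natCast_nonneg _))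
  have key := Pl.ordMinus_sum_le v S (fun t => coeff m (f t)) (-(Cst * (mdeg m : ℤ))) hB
    (fun t ht => by
      show -(Cst * (mdeg m : ℤ)) ≤ Pl.ordMinus v (coeff m (f t))
      have := h t ht m; omega)
  have key' : -(Cst * (mdeg m : ℤ)) ≤ Pl.ordMinus v (∑ t ∈ S, coeff m (f t)) := key
  omega

theorem Wb_mul {d : ℕ} (Pl : PlaceData K) (v : Pl.Pt) {Cst : ℤ} (hC : 0 ≤ Cst)
    (f g : MvPolynomial (Fin d) K) (hf : Wb Pl v Cst f) (hg : Wb Pl v Cst g) :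
    Wb Pl v Cst (f * g) := by
  intro m
  rw [coeff_mul]
  have hB : -(Cst * (mdeg m : ℤ)) ≤ 0 :=
    neg_nonpos.mpr (mul_nonneg hC (Int.natCast_nonneg _))
  have key := Pl.ordMinus_sum_le v (Finset.HasAntidiagonal.antidiagonal m)
    (fun q => coeff q.1 f * coeff q.2 g) (-(Cst * (mdeg m : ℤ))) hB ?_
  · have key' : -(Cst * (mdeg m : ℤ)) ≤
        Pl.ordMinus v (∑ q ∈ Finset.HasAntidiagonal.antidiagonal m, coeff q.1 f * coeff q.2 g) := key
    omega
  · intro q hq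
    show -(Cst * (mdeg m : ℤ)) ≤ Pl.ordMinus v (coeff q.1 f * coeff q.2 g)
    have hqm : q.1 + q.2 = m := Finset.HasAntidiagonal.mem_antidiagonal.mp hq
    have hdeg : mdeg q.1 + mdeg q.2 = mdeg m := by rw [← hqm, mdeg_add]
    have h1 := hf q.1
    have h2 := hg q.2
    have h3 := Pl.add_le_ordMinus_mul v (coeff q.1 f) (coeff q.2 g)
    have h4 : (mdeg m : ℤ) = (mdeg q.1 : ℤ) + (mdeg q.2 : ℤ) := by exact_mod_cast hdeg.symm
    rw [h4]
    have h5 := mul_add Cst (mdeg q.1 : ℤ) (mdeg q.2 : ℤ)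
    omega

theorem Wb_pow {d : ℕ} (Pl : PlaceData K) (v : Pl.Pt) {Cst : ℤ} (hC : 0 ≤ Cst)
    (f : MvPolynomial (Fin d) K) (hf : Wb Pl v Cst f) (e : ℕ) :
    Wb Pl v Cst (f ^ e) := by
  induction e with
  | zero => simpa using Wb_one Pl v hC
  | succ n ih =>
    rw [pow_succ]
    exact Wb_mul Pl v hC _ _ ih hf

theorem Wb_C_mul {d : ℕ} (Pl : PlaceData K) (v : Pl.Pt) {Cst B : ℤ} (hC : 0 ≤ Cst) (hB : 0 ≤ B)
    (c : K) (hc : -(Pl.ordMinus v c) ≤ B) (f : MvPolynomial (Fin d) K) (hf : Wb Pl v Cst f)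
    (h0 : coeff 0 f = 0) : Wb Pl v (Cst + B) (C c * f) := by
  intro m
  rw [coeff_C_mul]
  by_cases hm : m = 0
  · rw [hm, h0, mul_zero, Pl.ordMinus_zero']
    simpa using mul_nonneg (by linarith : (0 : ℤ) ≤ Cst + B) (Int.natCast_nonneg (mdeg (0 : Fin d →₀ ℕ)))
  · have hd := one_le_mdeg m hm
    have hd' : (1 : ℤ) ≤ (mdeg m : ℤ) := by exact_mod_cast hd
    have h1 := Pl.add_le_ordMinus_mul v c (coeff m f)
    have h2 := hf m
    nlinarith [mul_le_mul_of_nonneg_left hd' hB]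

theorem constantCoeff_polyIter_pow {d : ℕ} (F : Fin d → MvPolynomial (Fin d) K)
    {n : ℕ} {k : Fin d} (h : coeff 0 (polyIter F n k) = 0) {e : ℕ} (he : e ≠ 0) :
    coeff 0 (polyIter F n k ^ e) = 0 := by
  have h1 : constantCoeff (polyIter F n k) = 0 := by
    rw [constantCoeff_eq]; exact h
  have h2 : constantCoeff (polyIter F n k ^ e) = 0 := by
    rw [map_pow, h1, zero_pow he]
  rw [← h2, constantCoeff_eq]

/-- Main induction: if `F` is additive with coefficient matrix `a` and `Cv v` bounds
`-ord_v^-` of all entries of `a`, then `polyIter F n` has zero constant term and satisfies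
the weighted Gauss bound with constant `n * Cv v` at every place `v`. -/
theorem polyIter_Wb (Pl : PlaceData K) {p d : ℕ} (hp : p.Prime)
    (F : Fin d → MvPolynomial (Fin d) K) (r : Fin d → ℕ) (a : Fin d → ℕ → Fin d → K)
    (hF : ∀ j, F j = ∑ i ∈ Finset.range (r j + 1), ∑ k : Fin d, C (a j i k) * X k ^ p ^ i)
    (Cv : Pl.Pt → ℤ) (hCv0 : ∀ v, 0 ≤ Cv v)
    (hCva : ∀ v (j k : Fin d), ∀ i ∈ Finset.range (r j + 1), -(Pl.ordMinus v (a j i k)) ≤ Cv v) :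
    ∀ n (j : Fin d), coeff 0 (polyIter F n j) = 0 ∧
      ∀ v, Wb Pl v ((n : ℤ) * Cv v) (polyIter F n j) := by
  intro n
  induction n with
  | zero =>
    intro j
    constructor
    · show coeff 0 (X j) = 0
      rw [coeff_X']
      rw [if_neg]
      intro h
      have := DFunLike.congr_fun h j
      simp at this
    · intro v
      show Wb Pl v ((0 : ℤ) * Cv v) (X j)
      rw [zero_mul]
      exact Wb_X Pl v le_rfl j
  | succ n ih =>
    intro j
    have hstep : polyIter F (n + 1) j =
        ∑ i ∈ Finset.range (r j + 1), ∑ k : Fin d,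
          C (a j i k) * (polyIter F n k) ^ p ^ i := by
      show bind₁ (polyIter F n) (F j) = _
      rw [hF j, map_sum]
      refine Finset.sum_congr rfl fun i _ => ?_
      rw [map_sum]
      refine Finset.sum_congr rfl fun k _ => ?_
      rw [map_mul, map_pow, bind₁_C_right, bind₁_X_right]
    have hpe : ∀ i : ℕ, p ^ i ≠ 0 := fun i => pow_ne_zero i hp.pos.ne'
    constructor
    · rw [hstep, coeff_sum]
      refine Finset.sum_eq_zero fun i _ => ?_
      rw [coeff_sum]
      refine Finset.sum_eq_zero fun k _ => ?_
      rw [coeff_C_mul, constantCoeff_polyIter_pow F (ih k).1 (hpe i), mul_zero]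
    · intro v
      have hCst : (0 : ℤ) ≤ (n : ℤ) * Cv v := mul_nonneg (Int.natCast_nonneg n) (hCv0 v)
      rw [hstep]
      have hcast : ((n + 1 : ℕ) : ℤ) * Cv v = (n : ℤ) * Cv v + Cv v := by push_cast; ring
      rw [hcast]
      refine Wb_sum Pl v (by linarith [hCv0 v]) _ _ fun i hi => ?_
      refine Wb_sum Pl v (by linarith [hCv0 v]) _ _ fun k _ => ?_
      exact Wb_C_mul Pl v hCst (hCv0 v) _ (hCva v j k i hi) _
        (Wb_pow Pl v hCst _ ((ih k).2 v) _)
        (constantCoeff_polyIter_pow F (ih k).1 (hpe i))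

theorem finite_ne_zero_of_sum {ι : Type*} {X : Type} (S : Finset ι) (f : ι → X → ℤ)
    (h : ∀ i ∈ S, {v | f i v ≠ 0}.Finite) : {v | (∑ i ∈ S, f i v) ≠ 0}.Finite := by
  classical
  induction S using Finset.induction with
  | empty => simp
  | @insert x T hx ih =>
    have h1 : {v | f x v ≠ 0}.Finite := h x (Finset.mem_insert_self x T)
    have h2 : {v | (∑ i ∈ T, f i v) ≠ 0}.Finite :=
      ih fun i hi => h i (Finset.mem_insert_of_mem hi)
    refine Set.Finite.subset (h1.union h2) ?_
    intro v hv
    simp only [Set.mem_setOf_eq, Finset.sum_insert hx] at hv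
    by_contra hcon
    simp only [Set.mem_union, Set.mem_setOf_eq, not_or, not_not] at hcon
    rw [hcon.1, hcon.2, add_zero] at hv
    exact hv rfl

end Aux

/-- Lemma 5 of the paper. Let `F` be a nonzero additive polynomial self-map
of `K^d` and `1 ≤ s < splus` real numbers. For all sufficiently large `n`, every monomial
occurring in a component of `F^{∘n}` of total degree at most `s^n` has coefficient of
height at most `splus^n`. -/
theorem monomial_coefficient_height_bound
    {K : Type*} [Field K] (Pl : PlaceData K) (p d : ℕ) (hp : p.Prime) [CharP K p]
    (F : Fin d → MvPolynomial (Fin d) K) (hFadd : ∀ j, IsAddPoly p (F j)) (hFne : F ≠ 0)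
    (s splus : ℝ) (hs : 1 ≤ s) (hss : s < splus) :
    ∃ N₀ : ℕ, ∀ n ≥ N₀, ∀ j : Fin d, ∀ m : Fin d →₀ ℕ,
      coeff m (polyIter F n j) ≠ 0 →
      (((m.sum fun _ e => e : ℕ)) : ℝ) ≤ s ^ n →
      Pl.h1 (coeff m (polyIter F n j)) ≤ splus ^ n := by
  classical
  choose r a hF using hFadd
  set Cv : Pl.Pt → ℤ := fun v => ∑ j : Fin d, ∑ i ∈ Finset.range (r j + 1), ∑ k : Fin d,
    max (-(Pl.ordMinus v (a j i k))) 0 with hCvdef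
  have hCv0 : ∀ v, 0 ≤ Cv v := fun v =>
    Finset.sum_nonneg fun j _ => Finset.sum_nonneg fun i _ =>
      Finset.sum_nonneg fun k _ => le_max_right _ _
  have hCva : ∀ v (j k : Fin d), ∀ i ∈ Finset.range (r j + 1),
      -(Pl.ordMinus v (a j i k)) ≤ Cv v := by
    intro v j k i hi
    have t1 : max (-(Pl.ordMinus v (a j i k))) 0 ≤
        ∑ k' : Fin d, max (-(Pl.ordMinus v (a j i k'))) 0 :=
      Finset.single_le_sum (f := fun k' => max (-(Pl.ordMinus v (a j i k'))) 0)
        (fun k' _ => le_max_right _ _) (Finset.mem_univ k)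
    have t2 : (∑ k' : Fin d, max (-(Pl.ordMinus v (a j i k'))) 0) ≤
        ∑ i' ∈ Finset.range (r j + 1), ∑ k' : Fin d, max (-(Pl.ordMinus v (a j i' k'))) 0 :=
      Finset.single_le_sum (f := fun i' => ∑ k' : Fin d, max (-(Pl.ordMinus v (a j i' k'))) 0)
        (fun i' _ => Finset.sum_nonneg fun k' _ => le_max_right _ _) hi
    have t3 : (∑ i' ∈ Finset.range (r j + 1), ∑ k' : Fin d,
          max (-(Pl.ordMinus v (a j i' k'))) 0) ≤ Cv v :=
      Finset.single_le_sum (f := fun j' => ∑ i' ∈ Finset.range (r j' + 1),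
          ∑ k' : Fin d, max (-(Pl.ordMinus v (a j' i' k'))) 0)
        (fun j' _ => Finset.sum_nonneg fun i' _ =>
          Finset.sum_nonneg fun k' _ => le_max_right _ _) (Finset.mem_univ j)
    exact le_trans (le_max_left _ _) (le_trans t1 (le_trans t2 t3))
  have hInd := polyIter_Wb Pl hp F r a hF Cv hCv0 hCva
  have hlog : ∀ v, 0 ≤ Real.log (Pl.resCard v) := fun v =>
    Real.log_nonneg (by exact_mod_cast le_trans (by norm_num) (Pl.two_le_resCard v))
  have hCvfin : {v | Cv v ≠ 0}.Finite := by
    rw [hCvdef]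
    apply finite_ne_zero_of_sum
    intro j _
    apply finite_ne_zero_of_sum
    intro i _
    apply finite_ne_zero_of_sum
    intro k _
    by_cases ha : a j i k = 0
    · have : {v | max (-(Pl.ordMinus v (a j i k))) 0 ≠ 0} = ∅ := by
        ext v; simp [ha, PlaceData.ordMinus_zero']
      rw [this]; exact Set.finite_empty
    · refine Set.Finite.subset (Pl.finite_mulSupport _ ha) ?_
      intro v hv
      simp only [Set.mem_setOf_eq] at hv ⊢
      intro h0
      apply hv
      unfold PlaceData.ordMinus
      rw [if_neg ha, h0]
      simp
  set H : ℝ := ∑ᶠ v, (Cv v : ℝ) * Real.log (Pl.resCard v) with hHdef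
  have hH0 : 0 ≤ H :=
    finsum_nonneg fun v => mul_nonneg (by exact_mod_cast hCv0 v) (hlog v)
  have hmain : ∀ n (j : Fin d) (m : Fin d →₀ ℕ), coeff m (polyIter F n j) ≠ 0 →
      Pl.h1 (coeff m (polyIter F n j)) ≤ ((n * mdeg m : ℕ) : ℝ) * H := by
    intro n j m hne
    set c := coeff m (polyIter F n j) with hc
    have hfin1 : {v | Pl.ord v c ≠ 0}.Finite := Pl.finite_mulSupport c hne
    set s0 : Finset Pl.Pt := hfin1.toFinset ∪ hCvfin.toFinset with hs0
    have hsub1 : (Function.support fun v => (Pl.ordMinus v c : ℝ) * Real.log (Pl.resCard v))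
        ⊆ ↑s0 := by
      intro v hv
      simp only [Function.mem_support] at hv
      have h1 : Pl.ordMinus v c ≠ 0 := by
        intro h; apply hv; rw [h]; simp
      have h2 := Pl.ord_ne_zero_of_ordMinus_ne_zero v c h1
      exact Finset.mem_coe.mpr (Finset.mem_union_left _ (hfin1.mem_toFinset.mpr h2))
    have hsub2 : (Function.support fun v => (Cv v : ℝ) * Real.log (Pl.resCard v)) ⊆ ↑s0 := by
      intro v hv
      simp only [Function.mem_support] at hv
      have h1 : Cv v ≠ 0 := by
        intro h; apply hv; rw [h]; simp
      exact Finset.mem_coe.mpr (Finset.mem_union_right _ (hCvfin.mem_toFinset.mpr h1))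
    have e1 : Pl.h1 c = ∑ v ∈ s0, (-(Pl.ordMinus v c) : ℝ) * Real.log (Pl.resCard v) := by
      rw [PlaceData.h1, finsum_eq_sum_of_support_subset _ hsub1, ← Finset.sum_neg_distrib]
      exact Finset.sum_congr rfl fun v _ => by push_cast; ring
    have e2 : ((n * mdeg m : ℕ) : ℝ) * H =
        ∑ v ∈ s0, ((n * mdeg m : ℕ) : ℝ) * ((Cv v : ℝ) * Real.log (Pl.resCard v)) := by
      rw [hHdef, finsum_eq_sum_of_support_subset _ hsub2, Finset.mul_sum]
    rw [e1, e2]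
    refine Finset.sum_le_sum fun v _ => ?_
    have hbd := (hInd n j).2 v m
    have hbd' : (-(Pl.ordMinus v c) : ℝ) ≤ ((n * mdeg m : ℕ) : ℝ) * (Cv v : ℝ) := by
      have hint : -(Pl.ordMinus v c) ≤ ((n * mdeg m : ℕ) : ℤ) * Cv v := by
        have heq : ((n * mdeg m : ℕ) : ℤ) * Cv v = ((n : ℤ) * Cv v) * (mdeg m : ℤ) := by
          push_cast; ring
        rw [heq]; exact hbd
      exact_mod_cast hint
    calc (-(Pl.ordMinus v c) : ℝ) * Real.log (Pl.resCard v)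
        ≤ ((n * mdeg m : ℕ) : ℝ) * (Cv v : ℝ) * Real.log (Pl.resCard v) :=
          mul_le_mul_of_nonneg_right hbd' (hlog v)
      _ = ((n * mdeg m : ℕ) : ℝ) * ((Cv v : ℝ) * Real.log (Pl.resCard v)) := by ring
  have hsp0 : (0 : ℝ) < splus := by linarith
  have hr1 : |s / splus| < 1 := by
    rw [abs_of_nonneg (by positivity), div_lt_one hsp0]; exact hss
  have htend : Tendsto (fun n : ℕ => (n : ℝ) ^ 1 * (s / splus) ^ n) atTop (nhds 0) :=
    (summable_pow_mul_geometric_of_norm_lt_one (R := ℝ) 1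
      (by rw [Real.norm_eq_abs]; exact hr1)).tendsto_atTop_zero
  have hev : ∀ᶠ n : ℕ in atTop, (n : ℝ) ^ 1 * (s / splus) ^ n < (H + 1)⁻¹ :=
    htend.eventually_lt_const (by positivity)
  obtain ⟨N₀, hN₀⟩ := eventually_atTop.mp hev
  refine ⟨N₀, fun n hn j m hne hdeg => ?_⟩
  refine le_trans (hmain n j m hne) ?_
  have hsn : (0 : ℝ) < splus ^ n := pow_pos hsp0 n
  have hdeg' : ((mdeg m : ℕ) : ℝ) ≤ s ^ n := hdeg
  have hnum : ((n * mdeg m : ℕ) : ℝ) ≤ (n : ℝ) * s ^ n := by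
    push_cast
    exact mul_le_mul_of_nonneg_left hdeg' (Nat.cast_nonneg n)
  refine le_trans (mul_le_mul_of_nonneg_right hnum hH0) ?_
  have hq : (n : ℝ) ^ 1 * (s / splus) ^ n ≤ (H + 1)⁻¹ := le_of_lt (hN₀ n hn)
  rw [pow_one, div_pow] at hq
  have h2 := mul_le_mul_of_nonneg_right hq hsn.le
  have h3 : (n : ℝ) * (s ^ n / splus ^ n) * splus ^ n = (n : ℝ) * s ^ n := by
    field_simp
  rw [h3] at h2
  have h4 := mul_le_mul_of_nonneg_right h2 hH0
  have h5 : (H + 1)⁻¹ * splus ^ n * H ≤ splus ^ n := by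
    have hH1 : (0 : ℝ) < H + 1 := by linarith
    rw [show (H + 1)⁻¹ * splus ^ n * H = splus ^ n * (H / (H + 1)) by
      rw [div_eq_mul_inv]; ring]
    have hle : H / (H + 1) ≤ 1 := (div_le_one hH1).mpr (by linarith)
    calc splus ^ n * (H / (H + 1)) ≤ splus ^ n * 1 :=
          mul_le_mul_of_nonneg_left hle hsn.le
      _ = splus ^ n := mul_one _
  linarith

end
end

section
/- Let F be a polynomial self-map of affine d-space over a field K such that deg F^{∘n} ≥ 1 for all n ∈ ℕ, let δ := lim_{n→∞}(deg F^{∘n})^{1/n} be its dynamic degree and κ = κ(F) its saturation degree. Then δ^{1/d} ≤ κ ≤ δ. -/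
open MvPolynomial Filter

noncomputable section

variable {K : Type*} [Field K]

namespace SatAux
open Finset


variable {Kb : Type*} [Field Kb] {σ : Type*}

lemma degree_le_totalDegree {p : MvPolynomial σ Kb} {x : σ →₀ ℕ} (h : x ∈ p.support) :
    x.degree ≤ p.totalDegree := by
  simpa [Finsupp.degree_apply, Finsupp.sum] using MvPolynomial.le_totalDegree h

lemma coeff_eq_zero_of_lt {p : MvPolynomial σ Kb} {x : σ →₀ ℕ}
    (h : p.totalDegree < x.degree) : MvPolynomial.coeff x p = 0 := by
  by_contra hc
  exact absurd (degree_le_totalDegree (by simpa [MvPolynomial.mem_support_iff] using hc))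
    (by omega)

lemma top_ne_zero {p : MvPolynomial σ Kb} (hp : p ≠ 0) :
    homogeneousComponent p.totalDegree p ≠ 0 := by
  have hs : p.support.Nonempty :=
    Finset.nonempty_iff_ne_empty.mpr (fun h => hp (MvPolynomial.support_eq_empty.mp h))
  obtain ⟨x, hx, hxe⟩ := Finset.exists_mem_eq_sup p.support hs (fun s => s.sum fun _ e => e)
  have hdeg : x.degree = p.totalDegree := by
    rw [MvPolynomial.totalDegree, hxe]; simp [Finsupp.degree_apply, Finsupp.sum]
  intro h0
  have hcoeff := MvPolynomial.coeff_homogeneousComponent (n := p.totalDegree) (φ := p) x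
  rw [h0, MvPolynomial.coeff_zero, if_pos hdeg] at hcoeff
  exact (MvPolynomial.mem_support_iff.mp hx) hcoeff.symm

lemma degree_add (x y : σ →₀ ℕ) : (x + y).degree = x.degree + y.degree := by
  simp [Finsupp.degree_eq_weight_one, map_add]

lemma totalDegree_mul_eq {p q : MvPolynomial σ Kb} (hp : p ≠ 0) (hq : q ≠ 0) :
    (p * q).totalDegree = p.totalDegree + q.totalDegree := by
  classical
  refine le_antisymm (MvPolynomial.totalDegree_mul p q) ?_
  set a := homogeneousComponent p.totalDegree p with ha
  set b := homogeneousComponent q.totalDegree q with hb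
  have hab : a * b ≠ 0 := mul_ne_zero (top_ne_zero hp) (top_ne_zero hq)
  have hsupp : (a * b).support.Nonempty :=
    Finset.nonempty_iff_ne_empty.mpr (fun h => hab (MvPolynomial.support_eq_empty.mp h))
  obtain ⟨μ, hμ⟩ := hsupp
  have hhom : (a * b).IsHomogeneous (p.totalDegree + q.totalDegree) :=
    (homogeneousComponent_isHomogeneous p.totalDegree p).mul
      (homogeneousComponent_isHomogeneous q.totalDegree q)
  have hμdeg : μ.degree = p.totalDegree + q.totalDegree := by
    have := hhom (MvPolynomial.mem_support_iff.mp hμ)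
    simpa [Finsupp.degree_eq_weight_one, Pi.one_def] using this
  have key : MvPolynomial.coeff μ (p * q) = MvPolynomial.coeff μ (a * b) := by
    rw [MvPolynomial.coeff_mul, MvPolynomial.coeff_mul]
    refine Finset.sum_congr rfl fun x hx => ?_
    have hxy : x.1 + x.2 = μ := Finset.HasAntidiagonal.mem_antidiagonal.mp hx
    have hsum : x.1.degree + x.2.degree = p.totalDegree + q.totalDegree := by
      rw [← hμdeg, ← hxy, degree_add]
    rcases eq_or_ne x.1.degree p.totalDegree with h1 | h1
    · have h2 : x.2.degree = q.totalDegree := by omega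
      have e1 : MvPolynomial.coeff x.1 a = MvPolynomial.coeff x.1 p := by
        rw [ha, MvPolynomial.coeff_homogeneousComponent, if_pos h1]
      have e2 : MvPolynomial.coeff x.2 b = MvPolynomial.coeff x.2 q := by
        rw [hb, MvPolynomial.coeff_homogeneousComponent, if_pos h2]
      rw [e1, e2]
    · rcases lt_or_gt_of_ne h1 with hlt | hgt
      · have h2 : q.totalDegree < x.2.degree := by omega
        have e1 : MvPolynomial.coeff x.2 q = 0 := coeff_eq_zero_of_lt h2
        have e2 : MvPolynomial.coeff x.2 b = 0 := by
          rw [hb, MvPolynomial.coeff_homogeneousComponent, if_neg (by omega)]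
        rw [e1, e2, mul_zero, mul_zero]
      · have e1 : MvPolynomial.coeff x.1 p = 0 := coeff_eq_zero_of_lt hgt
        have e2 : MvPolynomial.coeff x.1 a = 0 := by
          rw [ha, MvPolynomial.coeff_homogeneousComponent, if_neg h1]
        rw [e1, e2, zero_mul, zero_mul]
  have hmem : μ ∈ (p * q).support :=
    MvPolynomial.mem_support_iff.mpr (key ▸ MvPolynomial.mem_support_iff.mp hμ)
  calc p.totalDegree + q.totalDegree = μ.degree := hμdeg.symm
    _ ≤ (p * q).totalDegree := degree_le_totalDegree hmem

lemma totalDegree_pow_eq (p : MvPolynomial σ Kb) (hp : p ≠ 0) (k : ℕ) :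
    (p ^ k).totalDegree = k * p.totalDegree := by
  induction k with
  | zero => simp
  | succ k ih =>
    rw [pow_succ, totalDegree_mul_eq (pow_ne_zero _ hp) hp, ih]; ring

lemma totalDegree_prod_eq {ι : Type*} (s : Finset ι) (g : ι → MvPolynomial σ Kb)
    (hg : ∀ i ∈ s, g i ≠ 0) :
    (∏ i ∈ s, g i) ≠ 0 ∧ (∏ i ∈ s, g i).totalDegree = ∑ i ∈ s, (g i).totalDegree := by
  classical
  induction s using Finset.induction_on with
  | empty => simp
  | insert a s hni ih =>
    obtain ⟨h1, h2⟩ := ih (fun i hi => hg i (Finset.mem_insert_of_mem hi))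
    have ha : g a ≠ 0 := hg a (Finset.mem_insert_self a s)
    rw [Finset.prod_insert hni, Finset.sum_insert hni]
    exact ⟨mul_ne_zero ha h1, by rw [totalDegree_mul_eq ha h1, h2]⟩


lemma li_of_distinct_totalDegree {ι : Type*} (f : ι → MvPolynomial σ Kb)
    (h0 : ∀ i, f i ≠ 0)
    (hd : Function.Injective fun i => (f i).totalDegree) :
    LinearIndependent Kb f := by
  classical
  rw [linearIndependent_iff']
  have key : ∀ s : Finset ι, ∀ g : ι → Kb, (∑ i ∈ s, g i • f i) = 0 → ∀ i ∈ s, g i = 0 := by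
    intro s
    induction s using Finset.strongInductionOn with
    | _ s ih =>
      intro g hg i hi
      have hs : s.Nonempty := ⟨i, hi⟩
      obtain ⟨i₀, hi₀, hmax⟩ := Finset.exists_max_image s (fun j => (f j).totalDegree) hs
      have hg0 : g i₀ = 0 := by
        by_contra hgi
        have hnz : g i₀ • f i₀ ≠ 0 := smul_ne_zero hgi (h0 i₀)
        have hsplit : g i₀ • f i₀ + ∑ j ∈ s.erase i₀, g j • f j = 0 :=
          (Finset.add_sum_erase s (fun j => g j • f j) hi₀).trans hg
        have hne : (∑ j ∈ s.erase i₀, g j • f j) = -(g i₀ • f i₀) :=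
          eq_neg_of_add_eq_zero_right hsplit
        rcases (s.erase i₀).eq_empty_or_nonempty with he | hne'
        · rw [he, Finset.sum_empty] at hne
          exact hnz (by rw [← neg_eq_zero, ← hne])
        · have hpos : 0 < (f i₀).totalDegree := by
            obtain ⟨j, hj⟩ := hne'
            have : (f j).totalDegree < (f i₀).totalDegree :=
              lt_of_le_of_ne (hmax j (Finset.mem_of_mem_erase hj))
                (fun hEq => (Finset.ne_of_mem_erase hj) (hd hEq))
            omega
          have hlt : (∑ j ∈ s.erase i₀, g j • f j).totalDegree < (f i₀).totalDegree := by
            refine lt_of_le_of_lt (MvPolynomial.totalDegree_finset_sum _ _) ?_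
            rw [Finset.sup_lt_iff hpos]
            intro j hj
            calc (g j • f j).totalDegree ≤ (f j).totalDegree := by
                  rw [MvPolynomial.smul_eq_C_mul]
                  exact le_trans (MvPolynomial.totalDegree_mul _ _)
                    (by simp [MvPolynomial.totalDegree_C])
              _ < _ := lt_of_le_of_ne (hmax j (Finset.mem_of_mem_erase hj))
                  (fun hEq => (Finset.ne_of_mem_erase hj) (hd hEq))
          have heq : (∑ j ∈ s.erase i₀, g j • f j).totalDegree = (f i₀).totalDegree := by
            rw [hne, MvPolynomial.totalDegree_neg, MvPolynomial.smul_eq_C_mul,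
              totalDegree_mul_eq (by simpa using hgi) (h0 i₀), MvPolynomial.totalDegree_C,
              zero_add]
          omega
      rcases eq_or_ne i i₀ with rfl | hnei
      · exact hg0
      · have hg' : (∑ j ∈ s.erase i₀, g j • f j) = 0 := by
          have h2 : g i₀ • f i₀ + ∑ j ∈ s.erase i₀, g j • f j = ∑ j ∈ s, g j • f j :=
            Finset.add_sum_erase s (fun j => g j • f j) hi₀
          rw [hg0, zero_smul, zero_add, hg] at h2
          exact h2
        exact ih (s.erase i₀) (Finset.erase_ssubset hi₀) g hg' i (Finset.mem_erase.mpr ⟨hnei, hi⟩)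
  exact fun s g h i hi => key s g h i hi

lemma totalDegree_bind₁_le {d : ℕ} (g : Fin d → MvPolynomial (Fin d) Kb)
    (f : MvPolynomial (Fin d) Kb) (B : ℕ) (hg : ∀ i, (g i).totalDegree ≤ B) :
    (bind₁ g f).totalDegree ≤ f.totalDegree * B := by
  classical
  conv_lhs => rw [f.as_sum]
  rw [map_sum]
  refine le_trans (MvPolynomial.totalDegree_finset_sum _ _) (Finset.sup_le fun v hv => ?_)
  rw [MvPolynomial.bind₁_monomial]
  calc (C (MvPolynomial.coeff v f) * ∏ i ∈ v.support, g i ^ v i).totalDegree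
      ≤ (C (MvPolynomial.coeff v f) : MvPolynomial (Fin d) Kb).totalDegree
        + (∏ i ∈ v.support, g i ^ v i).totalDegree := MvPolynomial.totalDegree_mul _ _
    _ = (∏ i ∈ v.support, g i ^ v i).totalDegree := by
        rw [MvPolynomial.totalDegree_C, zero_add]
    _ ≤ ∑ i ∈ v.support, (g i ^ v i).totalDegree := MvPolynomial.totalDegree_finset_prod _ _
    _ ≤ ∑ i ∈ v.support, v i * B := Finset.sum_le_sum fun i _ =>
        le_trans (MvPolynomial.totalDegree_pow _ _) (Nat.mul_le_mul_left _ (hg i))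
    _ = v.degree * B := by rw [Finsupp.degree_apply, Finset.sum_mul]
    _ ≤ f.totalDegree * B := Nat.mul_le_mul_right _ (degree_le_totalDegree hv)

lemma rep (D : ℕ → ℕ) (M : ℕ) (hD0 : D 0 = 1) (hpos : ∀ n, 1 ≤ D n)
    (hstep : ∀ n, D (n + 1) ≤ M * D n) :
    ∀ N t, t ≤ M * ∑ n ∈ Finset.range N, D n →
      ∃ e : ℕ → ℕ, (∀ n, e n ≤ M) ∧ ∑ n ∈ Finset.range N, e n * D n = t := by
  intro N
  induction N with
  | zero =>
    intro t ht
    simp only [Finset.range_zero, Finset.sum_empty, Nat.mul_zero, Nat.le_zero] at ht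
    exact ⟨fun _ => 0, fun _ => Nat.zero_le _, by simp [ht]⟩
  | succ N ih =>
    intro t ht
    have hDN : 1 ≤ D N := hpos N
    by_cases hM : M * D N ≤ t
    · obtain ⟨e, he, hsum⟩ := ih (t - M * D N) (by
        rw [Finset.sum_range_succ, Nat.mul_add] at ht; omega)
      refine ⟨fun n => if n = N then M else e n, fun n => ?_, ?_⟩
      · dsimp only; split
        · exact le_rfl
        · exact he n
      · have hterm : ∀ n ∈ Finset.range N, (if n = N then M else e n) * D n = e n * D n :=
          fun n hn => by rw [if_neg (Finset.mem_range.mp hn).ne]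
        simp only [Finset.sum_range_succ]
        rw [Finset.sum_congr rfl hterm]
        simp only [if_pos, ite_true, if_true]
        omega
    · push_neg at hM
      set q := t / D N with hq
      have hqM : q ≤ M := by
        have : t / D N < M := (Nat.div_lt_iff_lt_mul hDN).mpr (by omega)
        omega
      have hdm : q * D N + t % D N = t := by
        rw [hq, mul_comm]; exact Nat.div_add_mod t (D N)
      have hmod : t % D N < D N := Nat.mod_lt _ hDN
      have hsub : t - q * D N ≤ M * ∑ n ∈ Finset.range N, D n := by
        have ht' : t - q * D N = t % D N := by omega
        rcases Nat.eq_zero_or_pos N with rfl | hN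
        · have : t % D 0 = 0 := by rw [hD0]; exact Nat.mod_one t
          simp [ht', this]
        · have h1 : D N ≤ M * D (N - 1) := by
            have h := hstep (N - 1)
            rwa [Nat.sub_add_cancel hN] at h
          have h2 : D (N - 1) ≤ ∑ n ∈ Finset.range N, D n :=
            Finset.single_le_sum (fun n _ => Nat.zero_le _)
              (Finset.mem_range.mpr (by omega))
          have h3 : D N ≤ M * ∑ n ∈ Finset.range N, D n :=
            le_trans h1 (Nat.mul_le_mul_left M h2)
          omega
      obtain ⟨e, he, hsum⟩ := ih (t - q * D N) hsub
      refine ⟨fun n => if n = N then q else e n, fun n => ?_, ?_⟩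
      · dsimp only; split
        · exact hqM
        · exact he n
      · have hterm : ∀ n ∈ Finset.range N, (if n = N then q else e n) * D n = e n * D n :=
          fun n hn => by rw [if_neg (Finset.mem_range.mp hn).ne]
        simp only [Finset.sum_range_succ]
        rw [Finset.sum_congr rfl hterm]
        simp only [if_pos, ite_true, if_true]
        have hqle : q * D N ≤ t := by
          rw [hq]; exact Nat.div_mul_le_self t (D N)
        omega


variable {d : ℕ}

lemma le_polyDeg {R : Type*} [CommSemiring R] {d e : ℕ}
    (G : Fin e → MvPolynomial (Fin d) R) (j : Fin e) :
    (G j).totalDegree ≤ polyDeg G := by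
  unfold polyDeg
  exact Finset.le_sup (f := fun j => (G j).totalDegree) (Finset.mem_univ j)

lemma polyDeg_iter_zero (hd : 0 < d) (F : Fin d → MvPolynomial (Fin d) Kb) :
    polyDeg (polyIter F 0) = 1 := by
  have hne : (Finset.univ : Finset (Fin d)).Nonempty := ⟨⟨0, hd⟩, Finset.mem_univ _⟩
  show (Finset.univ.sup fun j => ((polyIter F 0) j).totalDegree) = 1
  have : (fun j : Fin d => ((polyIter F 0) j).totalDegree) = fun _ => 1 := by
    funext j
    show (X j : MvPolynomial (Fin d) Kb).totalDegree = 1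
    exact MvPolynomial.totalDegree_X j
  rw [this]
  exact Finset.sup_const hne 1

lemma polyDeg_iter_succ (F : Fin d → MvPolynomial (Fin d) Kb) (n : ℕ) :
    polyDeg (polyIter F (n + 1)) ≤ polyDeg F * polyDeg (polyIter F n) := by
  refine Finset.sup_le fun j _ => ?_
  calc ((polyIter F (n + 1)) j).totalDegree
      = (bind₁ (polyIter F n) (F j)).totalDegree := rfl
    _ ≤ (F j).totalDegree * polyDeg (polyIter F n) :=
        totalDegree_bind₁_le _ _ _ (fun i => le_polyDeg (polyIter F n) i)
    _ ≤ polyDeg F * polyDeg (polyIter F n) := by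
        have hj : (F j).totalDegree ≤ polyDeg F := le_polyDeg F j
        exact Nat.mul_le_mul_right _ hj

lemma satRank_ge (hd : 0 < d) (F : Fin d → MvPolynomial (Fin d) Kb)
    (hdeg : ∀ n : ℕ, 1 ≤ polyDeg (polyIter F n)) (N : ℕ) (hN : 1 ≤ N) :
    polyDeg F * polyDeg (polyIter F (N - 1)) + 1 ≤ satRank F (polyDeg F + 1) N := by
  classical
  set M := polyDeg F with hM
  set L := M + 1 with hL
  set D := fun n => polyDeg (polyIter F n) with hD
  have hD0 : D 0 = 1 := polyDeg_iter_zero hd F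
  have hstep : ∀ n, D (n + 1) ≤ M * D n := fun n => polyDeg_iter_succ F n
  set R := M * D (N - 1) with hR
  have hRle : R ≤ M * ∑ n ∈ Finset.range N, D n :=
    Nat.mul_le_mul_left M (Finset.single_le_sum (fun n _ => Nat.zero_le _)
      (Finset.mem_range.mpr (by omega)))
  -- choose coordinates realising the degree
  have hexists : ∀ n : ℕ, ∃ i : Fin d, ((polyIter F n) i).totalDegree = D n := by
    intro n
    obtain ⟨i, _, hi⟩ := Finset.exists_mem_eq_sup Finset.univ
      (⟨⟨0, hd⟩, Finset.mem_univ _⟩ : (Finset.univ : Finset (Fin d)).Nonempty)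
      (fun i => ((polyIter F n) i).totalDegree)
    exact ⟨i, hi.symm⟩
  choose ix hix using hexists
  have hfne : ∀ n : ℕ, (polyIter F n) (ix n) ≠ 0 := by
    intro n h0
    have h2 := hix n
    rw [h0, MvPolynomial.totalDegree_zero] at h2
    have h1 : 1 ≤ D n := hdeg n
    omega
  -- representations
  have hrep : ∀ t : Fin (R + 1), ∃ e : ℕ → ℕ, (∀ n, e n ≤ M) ∧
      ∑ n ∈ Finset.range N, e n * D n = (t : ℕ) :=
    fun t => rep D M hD0 hdeg hstep N t (le_trans (Nat.lt_succ_iff.mp t.isLt) hRle)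
  choose e he1 he2 using hrep
  -- the generator subsets
  set gens := fun s : Finset (Fin d × Fin N × Fin L) =>
    ∏ t' ∈ s, (polyIter F (t'.2.1 : ℕ) t'.1) ^ ((t'.2.2 : ℕ)) with hgens
  set P : Fin (R + 1) → MvPolynomial (Fin d) Kb := fun t =>
    gens ((Finset.univ : Finset (Fin N)).image fun n : Fin N =>
      (ix n, n, (⟨e t n, by have := he1 t n; omega⟩ : Fin L))) with hP
  have hPval : ∀ t, P t = ∏ n : Fin N, ((polyIter F (n : ℕ)) (ix n)) ^ (e t (n : ℕ)) := by
    intro t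
    rw [hP, hgens]
    beta_reduce
    rw [Finset.prod_image (fun a _ b _ hab =>
      congrArg (fun p : Fin d × Fin N × Fin L => p.2.1) hab)]
  have hPdeg : ∀ t, (P t).totalDegree = (t : ℕ) := by
    intro t
    rw [hPval t]
    have h1 := totalDegree_prod_eq (Finset.univ : Finset (Fin N))
      (fun n => ((polyIter F (n : ℕ)) (ix n)) ^ (e t (n : ℕ)))
      (fun n _ => pow_ne_zero _ (hfne n))
    rw [h1.2]
    have h2 : ∀ n : Fin N, (((polyIter F (n : ℕ)) (ix n)) ^ (e t (n : ℕ))).totalDegree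
        = e t (n : ℕ) * D (n : ℕ) := by
      intro n
      rw [totalDegree_pow_eq _ (hfne n), hix]
    rw [Finset.sum_congr rfl (fun n _ => h2 n)]
    have h3 := he2 t
    rw [← Fin.sum_univ_eq_sum_range (fun n => e t n * D n) N] at h3
    exact h3
  have hPne : ∀ t, P t ≠ 0 := by
    intro t
    rw [hPval t]
    exact (totalDegree_prod_eq (Finset.univ : Finset (Fin N))
      (fun n => ((polyIter F (n : ℕ)) (ix n)) ^ (e t (n : ℕ)))
      (fun n _ => pow_ne_zero _ (hfne n))).1
  have hli : LinearIndependent Kb P := by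
    apply li_of_distinct_totalDegree P hPne
    intro a b hab
    have : ((a : ℕ) : ℕ) = (b : ℕ) := by
      rw [← hPdeg a, ← hPdeg b]; exact hab
    exact Fin.ext this
  -- conclude
  have hsub : Set.range P ⊆ Set.range gens := by
    rintro _ ⟨t, rfl⟩
    exact ⟨_, rfl⟩
  have hspan : Submodule.span Kb (Set.range P) ≤ Submodule.span Kb (Set.range gens) :=
    Submodule.span_mono hsub
  haveI : Module.Finite Kb (Submodule.span Kb (Set.range gens)) :=
    FiniteDimensional.span_of_finite Kb (Set.finite_range gens)
  calc M * D (N - 1) + 1 = Fintype.card (Fin (R + 1)) := by rw [Fintype.card_fin]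
    _ = Module.finrank Kb (Submodule.span Kb (Set.range P)) := (finrank_span_eq_card hli).symm
    _ ≤ Module.finrank Kb (Submodule.span Kb (Set.range gens)) := Submodule.finrank_mono hspan
    _ = satRank F L N := rfl


lemma mem_span_monomials {B : ℕ} {p : MvPolynomial (Fin d) Kb} (hp : p.totalDegree ≤ B) :
    p ∈ Submodule.span Kb
      ((fun v : Fin d →₀ ℕ => (MvPolynomial.monomial v (1 : Kb))) '' {v | ∀ i, v i ≤ B}) := by
  classical
  rw [p.as_sum]
  apply Submodule.sum_mem
  intro v hv
  have h1 : MvPolynomial.monomial v (MvPolynomial.coeff v p)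
      = (MvPolynomial.coeff v p) • MvPolynomial.monomial v (1 : Kb) := by
    rw [MvPolynomial.smul_monomial, smul_eq_mul, mul_one]
  rw [h1]
  refine Submodule.smul_mem _ _ (Submodule.subset_span ⟨v, fun i => ?_, rfl⟩)
  exact le_trans (Finsupp.le_degree i v) (le_trans (degree_le_totalDegree hv) hp)

lemma finrank_span_le {ι : Type*} (g : ι → MvPolynomial (Fin d) Kb) (B : ℕ)
    (hg : ∀ s, (g s).totalDegree ≤ B) :
    Module.finrank Kb (Submodule.span Kb (Set.range g)) ≤ (B + 1) ^ d := by
  classical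
  set MF : Finset (MvPolynomial (Fin d) Kb) :=
    (Finset.univ : Finset (Fin d → Fin (B + 1))).image
      (fun gg => MvPolynomial.monomial
        (Finsupp.equivFunOnFinite.symm fun i => ((gg i : ℕ))) (1 : Kb)) with hMF
  have hsub : (fun v : Fin d →₀ ℕ => (MvPolynomial.monomial v (1 : Kb))) '' {v | ∀ i, v i ≤ B}
      ⊆ (MF : Set (MvPolynomial (Fin d) Kb)) := by
    rintro _ ⟨v, hv, rfl⟩
    have hv' : ∀ i, v i ≤ B := hv
    rw [hMF]
    simp only [Finset.coe_image, Set.mem_image, Finset.mem_coe, Finset.coe_univ,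
      Set.mem_univ, true_and, Set.mem_setOf_eq]
    refine ⟨fun i => ⟨v i, Nat.lt_succ_of_le (hv' i)⟩, ?_⟩
    have h2 : (fun i => ((⟨v i, Nat.lt_succ_of_le (hv' i)⟩ : Fin (B + 1)) : ℕ)) = ⇑v := rfl
    rw [h2, Finsupp.equivFunOnFinite_symm_coe]
  have hle : Submodule.span Kb (Set.range g)
      ≤ Submodule.span Kb (MF : Set (MvPolynomial (Fin d) Kb)) := by
    rw [Submodule.span_le]
    rintro _ ⟨s, rfl⟩
    exact Submodule.span_mono hsub (mem_span_monomials (hg s))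
  haveI : Module.Finite Kb (Submodule.span Kb (MF : Set (MvPolynomial (Fin d) Kb))) :=
    FiniteDimensional.span_of_finite Kb MF.finite_toSet
  calc Module.finrank Kb (Submodule.span Kb (Set.range g))
      ≤ Module.finrank Kb (Submodule.span Kb (MF : Set (MvPolynomial (Fin d) Kb))) :=
        Submodule.finrank_mono hle
    _ ≤ MF.card := finrank_span_finset_le_card MF
    _ ≤ (B + 1) ^ d := by
        refine le_trans Finset.card_image_le ?_
        simp [Finset.card_univ]

lemma satRank_le (F : Fin d → MvPolynomial (Fin d) Kb) (L N : ℕ) :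
    satRank F L N
      ≤ (d * N * L * (L * ((Finset.range N).sup fun n => polyDeg (polyIter F n))) + 1) ^ d := by
  classical
  set Dm := (Finset.range N).sup fun n => polyDeg (polyIter F n) with hDm
  unfold satRank
  refine finrank_span_le _ _ (fun s => ?_)
  have hterm : ∀ t : Fin d × Fin N × Fin L,
      ((polyIter F (t.2.1 : ℕ) t.1) ^ ((t.2.2 : ℕ))).totalDegree ≤ L * Dm := by
    intro t
    have h1 : ((polyIter F (t.2.1 : ℕ)) t.1).totalDegree ≤ Dm :=
      le_trans (le_polyDeg _ t.1)
        (Finset.le_sup (f := fun n => polyDeg (polyIter F n))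
          (Finset.mem_range.mpr t.2.1.isLt))
    calc ((polyIter F (t.2.1 : ℕ) t.1) ^ ((t.2.2 : ℕ))).totalDegree
        ≤ (t.2.2 : ℕ) * ((polyIter F (t.2.1 : ℕ)) t.1).totalDegree :=
          MvPolynomial.totalDegree_pow _ _
      _ ≤ L * Dm := Nat.mul_le_mul (le_of_lt t.2.2.isLt) h1
  calc (∏ t ∈ s, (polyIter F (t.2.1 : ℕ) t.1) ^ ((t.2.2 : ℕ))).totalDegree
      ≤ ∑ t ∈ s, ((polyIter F (t.2.1 : ℕ) t.1) ^ ((t.2.2 : ℕ))).totalDegree :=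
        MvPolynomial.totalDegree_finset_prod s _
    _ ≤ ∑ _t ∈ s, L * Dm := Finset.sum_le_sum (fun t _ => hterm t)
    _ = s.card * (L * Dm) := by rw [Finset.sum_const, smul_eq_mul]
    _ ≤ (d * N * L) * (L * Dm) := by
        refine Nat.mul_le_mul_right _ ?_
        have := Finset.card_le_univ s
        simpa [Finset.card_univ, Nat.mul_assoc] using this

end SatAux

set_option maxHeartbeats 1000000
open SatAux

/-- section 6.1 of the paper. For a polynomial self-map `F` of affine
`d`-space over a field `K` with `deg F^{∘n} ≥ 1` for all `n`, the saturation degree lies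
between `δ^{1/d}` and `δ`, where `δ = lim_n (deg F^{∘n})^{1/n}` is the dynamic degree. -/
theorem dyn_deg_root_le_sat_deg_le_dyn_deg
    {K : Type*} [Field K] (d : ℕ) (hd : 0 < d)
    (F : Fin d → MvPolynomial (Fin d) K)
    (hdeg : ∀ n : ℕ, 1 ≤ polyDeg (polyIter F n))
    (δ : ℝ)
    (hδ : Tendsto (fun n : ℕ => ((polyDeg (polyIter F n) : ℝ)) ^ ((n : ℝ)⁻¹))
      atTop (nhds δ)) :
    δ ^ ((d : ℝ)⁻¹) ≤ satDeg F ∧ satDeg F ≤ δ := by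
  classical
  set D : ℕ → ℕ := fun n => polyDeg (polyIter F n) with hD
  have hD1 : ∀ n, 1 ≤ D n := fun n => hdeg n
  -- δ ≥ 1
  have hδ1 : (1 : ℝ) ≤ δ := by
    refine ge_of_tendsto' hδ (fun n => ?_)
    rcases Nat.eq_zero_or_pos n with rfl | hn
    · simp
    · have h1 : (1 : ℝ) ≤ (D n : ℝ) := by exact_mod_cast hD1 n
      calc (1 : ℝ) = (1 : ℝ) ^ ((n : ℝ)⁻¹) := (Real.one_rpow _).symm
        _ ≤ ((D n : ℝ)) ^ ((n : ℝ)⁻¹) := Real.rpow_le_rpow (by norm_num) h1 (by positivity)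
  set SSet := {c : ℝ | 0 < c ∧ ∃ L : ℕ, ∀ᶠ N : ℕ in atTop,
    (c ^ (d * N) : ℝ) < (satRank F L N : ℝ)} with hSSet
  -- upper bound on all elements of SSet
  have hub : ∀ c ∈ SSet, c ≤ δ := by
    rintro c ⟨hc0, L, hev⟩
    by_contra hlt
    push_neg at hlt
    set y := (δ + c) / 2 with hy
    have hy1 : δ < y := by rw [hy]; linarith
    have hy2 : y < c := by rw [hy]; linarith
    have hy0 : (1 : ℝ) ≤ y := by linarith
    have hypos : (0 : ℝ) < y := by linarith
    -- eventually D n < y ^ n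
    have hevD : ∀ᶠ n : ℕ in atTop, (D n : ℝ) < y ^ n := by
      filter_upwards [hδ.eventually_lt_const hy1, eventually_ge_atTop 1] with n h1 h2
      have h3 : (D n : ℝ) = (((D n : ℝ)) ^ ((n : ℝ)⁻¹)) ^ n :=
        (Real.rpow_inv_natCast_pow (by positivity) (by omega)).symm
      rw [h3]
      exact pow_lt_pow_left₀ h1 (by positivity) (by omega)
    obtain ⟨n₁, hn₁⟩ := eventually_atTop.mp hevD
    set C₀ := (Finset.range (n₁ + 1)).sup D with hC₀def
    have hC₀ : ∀ n ≤ n₁, D n ≤ C₀ := fun n hn =>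
      Finset.le_sup (f := D) (Finset.mem_range.mpr (by omega))
    have hC₀1 : 1 ≤ C₀ := le_trans (hD1 0) (hC₀ 0 (Nat.zero_le _))
    -- bound the running max
    have hDm : ∀ N : ℕ, 1 ≤ N → (((Finset.range N).sup D : ℕ) : ℝ) ≤ (C₀ : ℝ) * y ^ N := by
      intro N hN1
      obtain ⟨m, hmem, hsup⟩ := Finset.exists_mem_eq_sup (Finset.range N)
        (Finset.nonempty_range_iff.mpr (by omega)) D
      rw [hsup]
      have hyN : (1 : ℝ) ≤ y ^ N := one_le_pow₀ hy0
      rcases le_or_gt m n₁ with hm | hm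
      · have hc1 : ((D m : ℕ) : ℝ) ≤ (C₀ : ℝ) := by exact_mod_cast hC₀ m hm
        have hc2 : (0:ℝ) ≤ (C₀ : ℝ) := Nat.cast_nonneg C₀
        nlinarith [hc1, hc2, hyN]
      · have h4 : (D m : ℝ) < y ^ m := hn₁ m (by omega)
        have h5 : y ^ m ≤ y ^ N := pow_le_pow_right₀ hy0 (le_of_lt (Finset.mem_range.mp hmem))
        have h6 : (1:ℝ) ≤ (C₀ : ℝ) := by exact_mod_cast hC₀1
        nlinarith [pow_nonneg (le_of_lt hypos) N]
    -- eventual polynomial bound on c ^ N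
    set A := ((d : ℝ) * L * L * C₀ + 1) with hA
    have hA1 : (1 : ℝ) ≤ A := by
      have : (0:ℝ) ≤ (d : ℝ) * L * L * C₀ := by positivity
      linarith
    have hkey : ∀ᶠ N : ℕ in atTop, c ^ N < A * N * y ^ N := by
      filter_upwards [hev, eventually_ge_atTop 1] with N hN hN1
      set B := d * N * L * (L * ((Finset.range N).sup D)) with hB
      have h7 : (satRank F L N : ℝ) ≤ (((B + 1) ^ d : ℕ) : ℝ) := by
        exact_mod_cast satRank_le F L N
      have h8 : (c ^ N) ^ d < (((B + 1 : ℕ)) : ℝ) ^ d := by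
        have h9 : c ^ (d * N) = (c ^ N) ^ d := by rw [mul_comm, pow_mul]
        rw [← h9]
        calc c ^ (d * N) < (satRank F L N : ℝ) := hN
          _ ≤ (((B + 1) ^ d : ℕ) : ℝ) := h7
          _ = (((B + 1 : ℕ)) : ℝ) ^ d := by push_cast; ring
      have h10 : c ^ N < ((B + 1 : ℕ) : ℝ) :=
        lt_of_pow_lt_pow_left₀ d (by positivity) h8
      have h12 := hDm N hN1
      have hyN : (1 : ℝ) ≤ y ^ N := one_le_pow₀ hy0
      have hN1' : (1 : ℝ) ≤ (N : ℝ) := by exact_mod_cast hN1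
      have hq2 : (0:ℝ) ≤ (d:ℝ) * N * L * L := by positivity
      have hcalc : ((B : ℕ) : ℝ) ≤ ((d:ℝ) * L * L * C₀) * ((N:ℝ) * y ^ N) := by
        calc ((B : ℕ) : ℝ)
            = ((d:ℝ) * N * L * L) * (((Finset.range N).sup D : ℕ) : ℝ) := by
              rw [hB]; push_cast; ring
          _ ≤ ((d:ℝ) * N * L * L) * ((C₀ : ℝ) * y ^ N) :=
              mul_le_mul_of_nonneg_left h12 hq2
          _ = ((d:ℝ) * L * L * C₀) * ((N:ℝ) * y ^ N) := by ring
      have h1le : (1:ℝ) ≤ (N:ℝ) * y ^ N := by nlinarith [hN1', hyN]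
      have hAeq : A * N * y ^ N = ((d:ℝ) * L * L * C₀) * ((N:ℝ) * y ^ N) + (N:ℝ) * y ^ N := by
        rw [hA]; ring
      have h11 : ((B + 1 : ℕ) : ℝ) ≤ A * N * y ^ N := by
        push_cast
        linarith [hcalc, h1le, hAeq]
      linarith
    -- contradiction via growth of (c / y) ^ N
    set r := c / y with hr
    have hr1 : 1 < r := (one_lt_div hypos).mpr hy2
    have hr0 : (0 : ℝ) ≤ r := by positivity
    set s := Real.sqrt r with hs
    have hs1 : 1 < s := by
      rw [hs]
      exact (Real.lt_sqrt (by norm_num)).mpr (by rw [one_pow]; exact hr1)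
    have hsq : s ^ 2 = r := by rw [hs]; exact Real.sq_sqrt hr0
    obtain ⟨N, hNprop, hN1, hNgt⟩ :=
      ((hkey.and ((eventually_ge_atTop 1).and
        (eventually_ge_atTop (Nat.ceil (A / (s - 1) ^ 2) + 1)))).exists)
    -- now derive numbers
    have hrN : r ^ N < A * N := by
      have h14 : c ^ N < A * N * y ^ N := hNprop
      rw [hr, div_pow, div_lt_iff₀ (by positivity)]
      exact h14
    have h15 : (1 : ℝ) + N * (s - 1) ≤ s ^ N := by
      have := one_add_mul_le_pow (a := s - 1) (by linarith) N
      simpa using this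
    have h16 : ((N : ℝ) * (s - 1)) ^ 2 ≤ (s ^ N) ^ 2 := by
      have hnn : (0:ℝ) ≤ (N : ℝ) * (s - 1) :=
        mul_nonneg (Nat.cast_nonneg N) (by linarith)
      exact pow_le_pow_left₀ hnn (by linarith) 2
    have h17 : (s ^ N) ^ 2 = r ^ N := by rw [← pow_mul, mul_comm N 2, pow_mul, hsq]
    have h18 : (N : ℝ) ^ 2 * (s - 1) ^ 2 < A * N := by
      calc (N : ℝ) ^ 2 * (s - 1) ^ 2 = ((N : ℝ) * (s - 1)) ^ 2 := by ring
        _ ≤ (s ^ N) ^ 2 := h16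
        _ = r ^ N := h17
        _ < A * N := hrN
    have hceil : A / (s - 1) ^ 2 ≤ (Nat.ceil (A / (s - 1) ^ 2) : ℝ) := Nat.le_ceil _
    have hNbig : (Nat.ceil (A / (s - 1) ^ 2) : ℝ) + 1 ≤ (N : ℝ) := by
      exact_mod_cast hNgt
    have hspos : (0:ℝ) < (s - 1) ^ 2 := pow_pos (by linarith) 2
    have hNpos : (0:ℝ) < (N:ℝ) := by exact_mod_cast hN1
    have h19 : A < (N:ℝ) * (s - 1) ^ 2 := by
      have h20 : A / (s - 1) ^ 2 < (N : ℝ) := by linarith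
      rw [div_lt_iff₀ hspos] at h20
      linarith [h20]
    have h21 : A * N < ((N:ℝ) * (s - 1) ^ 2) * N := mul_lt_mul_of_pos_right h19 hNpos
    have h22 : ((N:ℝ) * (s - 1) ^ 2) * N = (N:ℝ) ^ 2 * (s - 1) ^ 2 := by ring
    linarith [h18, h21, h22.le, h22.ge]
  -- lower bound: membership
  have hδpos : (0:ℝ) < δ := by linarith
  have hlb : ∀ c : ℝ, 0 < c → c < δ ^ ((d : ℝ)⁻¹) → c ∈ SSet := by
    intro c hc0 hcδ
    set lam := c ^ d with hlam
    have hlam0 : 0 < lam := pow_pos hc0 d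
    have hlamδ : lam < δ := by
      have h1 : c ^ d < (δ ^ ((d : ℝ)⁻¹)) ^ d :=
        pow_lt_pow_left₀ hcδ (le_of_lt hc0) (by omega)
      rwa [Real.rpow_inv_natCast_pow (le_of_lt hδpos) (by omega)] at h1
    set x := (lam + δ) / 2 with hx
    have hlx : lam < x := by rw [hx]; linarith
    have hxδ : x < δ := by rw [hx]; linarith
    have hx0 : (0:ℝ) < x := by linarith
    set M := polyDeg F with hM
    have hM1 : 1 ≤ M := by
      have h1 : D 1 ≤ M * D 0 := polyDeg_iter_succ F 0
      have h2 : D 0 = 1 := polyDeg_iter_zero hd F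
      have h3 := hD1 1
      rw [h2, Nat.mul_one] at h1
      omega
    refine ⟨hc0, M + 1, ?_⟩
    -- eventually x ^ n < D n
    have hev1 : ∀ᶠ n : ℕ in atTop, x ^ n < (D n : ℝ) := by
      filter_upwards [hδ.eventually (eventually_gt_nhds hxδ), eventually_ge_atTop 1]
        with n h1 h2
      have h3 : (D n : ℝ) = (((D n : ℝ)) ^ ((n : ℝ)⁻¹)) ^ n :=
        (Real.rpow_inv_natCast_pow (by positivity) (by omega)).symm
      rw [h3]
      exact pow_lt_pow_left₀ h1 (le_of_lt hx0) (by omega)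
    obtain ⟨n₂, hn₂⟩ := eventually_atTop.mp hev1
    have hev2 : ∀ᶠ N : ℕ in atTop, (lam / x) ^ (N - 1) < 1 / lam := by
      have hbase : Tendsto (fun k : ℕ => (lam / x) ^ k) atTop (nhds 0) :=
        tendsto_pow_atTop_nhds_zero_of_lt_one (by positivity) ((div_lt_one hx0).mpr hlx)
      have hcomp : Tendsto (fun N : ℕ => (lam / x) ^ (N - 1)) atTop (nhds 0) :=
        hbase.comp (tendsto_sub_atTop_nat 1)
      exact hcomp.eventually (eventually_lt_nhds (by positivity))
    filter_upwards [hev2, eventually_ge_atTop (n₂ + 1)] with N hNpow hNn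
    have hN1 : 1 ≤ N := by omega
    have hxD : x ^ (N - 1) < (D (N - 1) : ℝ) := hn₂ (N - 1) (by omega)
    have hsat : (M * D (N - 1) + 1 : ℕ) ≤ satRank F (M + 1) N :=
      satRank_ge hd F hdeg N hN1
    have hsat' : (D (N - 1) : ℝ) < (satRank F (M + 1) N : ℝ) := by
      have h5 : D (N - 1) < M * D (N - 1) + 1 := by
        have := hD1 (N - 1); nlinarith [hM1]
      have h6 : (D (N-1) : ℕ) < satRank F (M + 1) N := lt_of_lt_of_le h5 hsat
      exact_mod_cast h6
    have hsplit : c ^ (d * N) = (lam * (lam / x) ^ (N - 1)) * x ^ (N - 1) := by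
      rw [pow_mul, ← hlam]
      have h7 : lam ^ N = lam * lam ^ (N - 1) := by
        rw [← pow_succ']
        congr 1
        omega
      rw [h7, div_pow, mul_assoc]
      congr 1
      rw [div_mul_cancel₀]
      positivity
    have hsmall : lam * (lam / x) ^ (N - 1) < 1 := by
      have h8 : lam * ((lam / x) ^ (N - 1)) < lam * (1 / lam) :=
        mul_lt_mul_of_pos_left hNpow hlam0
      rwa [mul_one_div, div_self (ne_of_gt hlam0)] at h8
    calc c ^ (d * N) = (lam * (lam / x) ^ (N - 1)) * x ^ (N - 1) := hsplit
      _ < 1 * x ^ (N - 1) := by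
          apply mul_lt_mul_of_pos_right hsmall (by positivity)
      _ = x ^ (N - 1) := one_mul _
      _ < (D (N - 1) : ℝ) := hxD
      _ < (satRank F (M + 1) N : ℝ) := hsat'
  -- conclusion
  have hbdd : BddAbove SSet := ⟨δ, fun c hc => hub c hc⟩
  have hp0 : (0:ℝ) < δ ^ ((d : ℝ)⁻¹) := Real.rpow_pos_of_pos hδpos _
  constructor
  · have hsub : Set.Ioo (0:ℝ) (δ ^ ((d : ℝ)⁻¹)) ⊆ SSet := fun c hc => hlb c hc.1 hc.2
    calc δ ^ ((d : ℝ)⁻¹) = sSup (Set.Ioo (0:ℝ) (δ ^ ((d : ℝ)⁻¹))) := (csSup_Ioo hp0).symm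
      _ ≤ sSup SSet := csSup_le_csSup hbdd (Set.nonempty_Ioo.mpr hp0) hsub
      _ = satDeg F := rfl
  · exact Real.sSup_le (fun c hc => hub c hc) (by linarith)

end
end

section
/- Let K be a field and F = (f_1(x_1),…,f_d(x_d)) : 𝔸^d → 𝔸^d, where f_1,…,f_d ∈ K[x] are univariate polynomials of degrees q_j := deg f_j > 0. Then the saturation degree of F equals κ(F) = (q_1 ⋯ q_d)^{1/d}, whereas the dynamic degree equals δ = max_{1≤j≤d} q_j. -/
open MvPolynomial Filter

noncomputable section

variable {K : Type*} [Field K]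

namespace SplitSat

variable {K : Type*} [Field K] {d : ℕ}

/-- `n`-fold composition iterates of the univariate coordinate polynomials. -/
def Pit (f : Fin d → Polynomial K) : ℕ → Fin d → Polynomial K
  | 0 => fun _ => Polynomial.X
  | n + 1 => fun j => (f j).comp (Pit f n j)

/-- embedding of a univariate polynomial via the `j`-th variable -/
def uni (j : Fin d) (P : Polynomial K) : MvPolynomial (Fin d) K :=
  Polynomial.aeval (X j) P

lemma Fmap_eq (f : Fin d → Polynomial K) (j : Fin d) :
    Polynomial.eval₂ MvPolynomial.C (MvPolynomial.X j) (f j) = uni j (f j) := by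
  rw [uni, Polynomial.aeval_def, MvPolynomial.algebraMap_eq]

lemma polyIter_split (f : Fin d → Polynomial K) :
    ∀ (n : ℕ) (j : Fin d),
      polyIter (fun j => Polynomial.eval₂ MvPolynomial.C (MvPolynomial.X j) (f j)) n j =
        uni j (Pit f n j)
  | 0, j => by simp [polyIter, Pit, uni]
  | (n+1), j => by
    show bind₁ _ (Polynomial.eval₂ MvPolynomial.C (MvPolynomial.X j) (f j)) = _
    rw [Fmap_eq, uni, ← Polynomial.aeval_algHom_apply, bind₁_X_right, polyIter_split f n j]
    show Polynomial.aeval (Polynomial.aeval (X j) (Pit f n j)) (f j)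
      = Polynomial.aeval (X j) ((f j).comp (Pit f n j))
    rw [Polynomial.aeval_comp]

lemma Pit_natDegree (f : Fin d → Polynomial K) (n : ℕ) (j : Fin d) :
    (Pit f n j).natDegree = (f j).natDegree ^ n := by
  induction n with
  | zero => simp [Pit]
  | succ n ih => rw [Pit, Polynomial.natDegree_comp, ih, pow_succ]; ring

lemma Pit_ne_zero (f : Fin d → Polynomial K) (hq : ∀ j, 0 < (f j).natDegree) (n : ℕ) (j : Fin d) :
    Pit f n j ≠ 0 :=
  Polynomial.ne_zero_of_natDegree_gt (n := 0)
    (by rw [Pit_natDegree]; exact pow_pos (hq j) n)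

lemma uni_eq_sum (j : Fin d) (P : Polynomial K) :
    uni j P = ∑ i ∈ P.support, monomial (Finsupp.single j i) (P.coeff i) := by
  rw [uni, Polynomial.aeval_def, Polynomial.eval₂_eq_sum, Polynomial.sum_def]
  exact Finset.sum_congr rfl fun i _ => by
    rw [MvPolynomial.algebraMap_eq, C_mul_X_pow_eq_monomial]

lemma support_uni (j : Fin d) (P : Polynomial K) {m : Fin d →₀ ℕ}
    (hm : m ∈ (uni j P).support) : ∃ i ∈ P.support, m = Finsupp.single j i := by
  rw [MvPolynomial.mem_support_iff, uni_eq_sum, MvPolynomial.coeff_sum] at hm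
  obtain ⟨i, hi, hne⟩ := Finset.exists_ne_zero_of_sum_ne_zero hm
  rw [MvPolynomial.coeff_monomial] at hne
  refine ⟨i, hi, ?_⟩
  by_contra h
  exact hne (if_neg fun h' => h h'.symm)

lemma coeff_uni_single (j : Fin d) (P : Polynomial K) (n : ℕ) :
    MvPolynomial.coeff (Finsupp.single j n) (uni j P) = P.coeff n := by
  classical
  rw [uni_eq_sum, MvPolynomial.coeff_sum]
  have : ∀ i ∈ P.support,
      MvPolynomial.coeff (Finsupp.single j n) (monomial (Finsupp.single j i) (P.coeff i)) =
        if i = n then P.coeff i else 0 := by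
    intro i _
    rw [MvPolynomial.coeff_monomial]
    congr 1
    simp [((Finsupp.single_injective j).eq_iff : Finsupp.single j i = Finsupp.single j n ↔ i = n)]
  rw [Finset.sum_congr rfl this, Finset.sum_ite_eq' P.support n (fun i => P.coeff i)]
  split
  · rfl
  · exact (Polynomial.notMem_support_iff.mp (by assumption)).symm

lemma totalDegree_uni_le (j : Fin d) (P : Polynomial K) :
    (uni j P).totalDegree ≤ P.natDegree := by
  apply Finset.sup_le
  intro m hm
  obtain ⟨i, hi, rfl⟩ := support_uni j P hm
  rw [Finsupp.sum_single_index] <;>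
    [exact Polynomial.le_natDegree_of_mem_supp i hi; rfl]

lemma totalDegree_uni (j : Fin d) (P : Polynomial K) (hP : P ≠ 0) :
    (uni j P).totalDegree = P.natDegree := by
  refine le_antisymm (totalDegree_uni_le j P) ?_
  have hmem : Finsupp.single j P.natDegree ∈ (uni j P).support := by
    rw [MvPolynomial.mem_support_iff, coeff_uni_single]
    exact Polynomial.leadingCoeff_ne_zero.mpr hP
  have := MvPolynomial.le_totalDegree hmem
  rwa [Finsupp.sum_single_index rfl] at this

lemma degreeOf_uni_self_le (j : Fin d) (P : Polynomial K) :
    degreeOf j (uni j P) ≤ P.natDegree := by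
  rw [degreeOf_le_iff]
  intro m hm
  obtain ⟨i, hi, rfl⟩ := support_uni j P hm
  rw [Finsupp.single_eq_same]
  exact Polynomial.le_natDegree_of_mem_supp i hi

lemma degreeOf_uni_ne (j k : Fin d) (P : Polynomial K) (h : k ≠ j) :
    degreeOf k (uni j P) = 0 := by
  refine Nat.le_zero.mp ?_
  rw [degreeOf_le_iff]
  intro m hm
  obtain ⟨i, hi, rfl⟩ := support_uni j P hm
  rw [Finsupp.single_eq_of_ne' (Ne.symm h)]


/-- digit expansion sum -/
lemma digit_sum (q : ℕ) (a N : ℕ) :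
    ∑ n ∈ Finset.range N, q ^ n * (a / q ^ n % q) = a % q ^ N := by
  induction N with
  | zero => simp [Nat.mod_one]
  | succ N ih =>
    rw [Finset.sum_range_succ, ih]
    have h1 : a / q ^ N % q = a % q ^ (N + 1) / q ^ N := by
      rw [← Nat.mod_mul_right_div_self, ← pow_succ]
    have h2 : a % q ^ N = a % q ^ (N + 1) % q ^ N :=
      (Nat.mod_mod_of_dvd a (pow_dvd_pow q (Nat.le_succ N))).symm
    rw [h1, h2, Nat.mod_add_div]

/-- mixed-radix (base `B`) injectivity -/
lemma base_inj {B : ℕ} : ∀ {d : ℕ} (α β : Fin d → ℕ), (∀ j, α j < B) → (∀ j, β j < B) →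
    (∑ j, α j * B ^ (j : ℕ)) = (∑ j, β j * B ^ (j : ℕ)) → α = β := by
  intro d
  induction d with
  | zero => intro α β _ _ _; funext j; exact j.elim0
  | succ d ih =>
    intro α β hα hβ hsum
    have hB : 0 < B := Nat.pos_of_ne_zero fun h => absurd (hα 0) (by simp [h])
    have expand : ∀ γ : Fin (d + 1) → ℕ,
        (∑ j, γ j * B ^ (j : ℕ)) = γ 0 + B * ∑ j : Fin d, γ j.succ * B ^ (j : ℕ) := by
      intro γ
      rw [Fin.sum_univ_succ]
      simp only [Fin.val_zero, pow_zero, mul_one, Fin.val_succ]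
      rw [Finset.mul_sum]
      congr 1
      refine Finset.sum_congr rfl fun j _ => ?_
      ring
    rw [expand α, expand β] at hsum
    have h0 : α 0 = β 0 := by
      have := congrArg (· % B) hsum
      simpa [Nat.add_mul_mod_self_left, Nat.mod_eq_of_lt (hα 0), Nat.mod_eq_of_lt (hβ 0)]
        using this
    have htail : (fun j : Fin d => α j.succ) = fun j : Fin d => β j.succ := by
      apply ih _ _ (fun j => hα j.succ) (fun j => hβ j.succ)
      have := hsum
      rw [h0] at this
      have := Nat.add_left_cancel this
      exact Nat.eq_of_mul_eq_mul_left hB this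
    funext j
    refine Fin.cases h0 (fun i => ?_) j
    exact congrFun htail i

/-- nonzero univariate polynomials with pairwise distinct degrees are linearly independent -/
lemma linearIndependent_of_natDegree_inj {K : Type*} [Field K] {ι : Type*}
    (v : ι → Polynomial K) (h0 : ∀ i, v i ≠ 0)
    (hinj : Function.Injective fun i => (v i).natDegree) :
    LinearIndependent K v := by
  classical
  rw [linearIndependent_iff']
  intro s
  induction s using Finset.strongInduction with
  | _ s ihs =>
    intro g hg i hi
    have hne : s.Nonempty := ⟨i, hi⟩
    obtain ⟨i0, hi0, hmax⟩ := Finset.exists_mem_eq_sup' hne (fun i => (v i).natDegree)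
    have hgi0 : g i0 = 0 := by
      have hco := congrArg (fun p => Polynomial.coeff p ((v i0).natDegree)) hg
      simp only [Polynomial.finset_sum_coeff, Polynomial.coeff_smul, smul_eq_mul,
        Polynomial.coeff_zero] at hco
      rw [Finset.sum_eq_single i0] at hco
      · have hlc : (v i0).coeff (v i0).natDegree ≠ 0 :=
          Polynomial.leadingCoeff_ne_zero.mpr (h0 i0)
        exact (mul_eq_zero.mp hco).resolve_right hlc
      · intro b hb hbne
        have hle : (v b).natDegree ≤ (v i0).natDegree := by
          rw [← hmax]; exact Finset.le_sup' (fun i => (v i).natDegree) hb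
        have hlt : (v b).natDegree < (v i0).natDegree :=
          lt_of_le_of_ne hle (fun h => hbne (hinj h))
        rw [Polynomial.coeff_eq_zero_of_natDegree_lt hlt, mul_zero]
      · intro h; exact absurd hi0 h
    rcases eq_or_ne i i0 with rfl | hne'
    · exact hgi0
    · have herase : ∑ j ∈ s.erase i0, g j • v j = 0 := by
        rw [Finset.sum_erase s (by rw [hgi0, zero_smul])]
        exact hg
      exact ihs (s.erase i0) (Finset.erase_ssubset hi0) g herase i
        (Finset.mem_erase.mpr ⟨hne', hi⟩)


section DynDeg
variable {K : Type*} [Field K] {d : ℕ}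

lemma polyDeg_iter (f : Fin d → Polynomial K) (hq : ∀ j, 0 < (f j).natDegree) (hd : 0 < d)
    (n : ℕ) :
    polyDeg (polyIter (fun j => Polynomial.eval₂ MvPolynomial.C (MvPolynomial.X j) (f j)) n) =
      (Finset.univ.sup fun j : Fin d => (f j).natDegree) ^ n := by
  have huniv : (Finset.univ : Finset (Fin d)).Nonempty := ⟨⟨0, hd⟩, Finset.mem_univ _⟩
  have hdeg : ∀ j : Fin d,
      (polyIter (fun j => Polynomial.eval₂ MvPolynomial.C (MvPolynomial.X j) (f j)) n j).totalDegree
        = (f j).natDegree ^ n := by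
    intro j
    rw [polyIter_split, totalDegree_uni j _ (Pit_ne_zero f hq n j), Pit_natDegree]
  rw [polyDeg]
  simp only [hdeg]
  apply le_antisymm
  · exact Finset.sup_le fun j _ =>
      Nat.pow_le_pow_left (Finset.le_sup (f := fun j : Fin d => (f j).natDegree)
        (Finset.mem_univ j)) n
  · obtain ⟨j0, _, hj0⟩ := Finset.exists_mem_eq_sup Finset.univ huniv
      (fun j : Fin d => (f j).natDegree)
    rw [hj0]
    exact Finset.le_sup (f := fun j : Fin d => (f j).natDegree ^ n) (Finset.mem_univ j0)

lemma dyn_deg_tendsto (f : Fin d → Polynomial K) (hq : ∀ j, 0 < (f j).natDegree) (hd : 0 < d) :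
    Tendsto (fun n : ℕ =>
        ((polyDeg (polyIter
          (fun j : Fin d => Polynomial.eval₂ MvPolynomial.C (MvPolynomial.X j) (f j)) n) : ℝ))
          ^ ((n : ℝ)⁻¹)) atTop
      (nhds ((Finset.univ.sup fun j : Fin d => (f j).natDegree : ℕ) : ℝ)) := by
  set Q : ℕ := Finset.univ.sup fun j : Fin d => (f j).natDegree with hQ
  have hQ1 : 1 ≤ Q := le_trans (hq ⟨0, hd⟩)
    (Finset.le_sup (f := fun j : Fin d => (f j).natDegree) (Finset.mem_univ _))
  apply Tendsto.congr' (f₁ := fun _ : ℕ => (Q : ℝ))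
  · filter_upwards [eventually_ge_atTop 1] with n hn
    rw [polyDeg_iter f hq hd n, ← hQ]
    have hn0 : (n : ℝ) ≠ 0 := Nat.cast_ne_zero.mpr (by omega)
    rw [Nat.cast_pow, ← Real.rpow_natCast (Q : ℝ) n, ← Real.rpow_mul (by positivity),
      mul_inv_cancel₀ hn0, Real.rpow_one]
  · exact tendsto_const_nhds

end DynDeg

section Lower
variable {K : Type*} [Field K] {d : ℕ}

lemma satRank_lower (f : Fin d → Polynomial K) (hq : ∀ j, 0 < (f j).natDegree) (N : ℕ) :
    ∏ j : Fin d, (f j).natDegree ^ N ≤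
      satRank (fun j => Polynomial.eval₂ MvPolynomial.C (MvPolynomial.X j) (f j))
        (Finset.univ.sup fun j => (f j).natDegree) N := by
  classical
  set q : Fin d → ℕ := fun j => (f j).natDegree with hqdef
  set Q : ℕ := Finset.univ.sup q with hQdef
  have hqQ : ∀ j, q j ≤ Q := fun j => Finset.le_sup (f := q) (Finset.mem_univ j)
  set F : Fin d → MvPolynomial (Fin d) K :=
    (fun j => Polynomial.eval₂ MvPolynomial.C (MvPolynomial.X j) (f j)) with hF
  set B : ℕ := ∏ j : Fin d, q j ^ N with hBdef
  have hB1 : ∀ j, q j ^ N ≤ B := fun j =>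
    Finset.single_le_prod' (fun i _ => Nat.one_le_pow _ _ (hq i)) (Finset.mem_univ j)
  have hBpos : 0 < B := Finset.prod_pos fun i _ => pow_pos (hq i) N
  have hdig : ∀ (j : Fin d) (a n : ℕ), a / q j ^ n % q j < Q :=
    fun j a n => lt_of_lt_of_le (Nat.mod_lt _ (hq j)) (hqQ j)
  set ι := (∀ j : Fin d, Fin (q j ^ N)) with hι
  let c : ι → Fin d → Fin N → Fin Q :=
    fun α j n => ⟨(α j : ℕ) / q j ^ (n : ℕ) % q j, hdig j _ _⟩
  let g : ι → MvPolynomial (Fin d) K :=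
    fun α => ∏ p : Fin d × Fin N, (polyIter F ((p.2 : Fin N) : ℕ) p.1) ^ ((c α p.1 p.2 : ℕ))
  set S := Submodule.span K (Set.range fun s : Finset (Fin d × Fin N × Fin Q) =>
      ∏ t ∈ s, (polyIter F (t.2.1 : ℕ) t.1) ^ ((t.2.2 : ℕ))) with hS
  have hg_mem : ∀ α, g α ∈ S := by
    intro α
    apply Submodule.subset_span
    refine ⟨Finset.image (fun p : Fin d × Fin N => (p.1, p.2, c α p.1 p.2)) Finset.univ, ?_⟩
    show ∏ t ∈ Finset.image (fun p : Fin d × Fin N => (p.1, p.2, c α p.1 p.2)) Finset.univ,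
        (polyIter F (t.2.1 : ℕ) t.1) ^ ((t.2.2 : ℕ)) = g α
    rw [Finset.prod_image (fun p _ p' _ h => by
      exact Prod.ext (congrArg (fun z : Fin d × Fin N × Fin Q => z.1) h)
        (congrArg (fun z : Fin d × Fin N × Fin Q => z.2.1) h))]
  -- the degree-separating substitution
  let φ : MvPolynomial (Fin d) K →ₐ[K] Polynomial K :=
    MvPolynomial.aeval (fun j : Fin d => (Polynomial.X : Polynomial K) ^ (B ^ (j : ℕ)))
  have hφuni : ∀ (j : Fin d) (P : Polynomial K),
      φ (uni j P) = P.comp (Polynomial.X ^ (B ^ (j : ℕ))) := by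
    intro j P
    rw [Polynomial.comp_eq_aeval, uni, ← Polynomial.aeval_algHom_apply]
    simp [φ]
  have hfac_deg : ∀ (j : Fin d) (n : ℕ),
      ((Pit f n j).comp (Polynomial.X ^ B ^ (j : ℕ))).natDegree = q j ^ n * B ^ (j : ℕ) := by
    intro j n
    rw [Polynomial.natDegree_comp, Pit_natDegree, Polynomial.natDegree_X_pow]
  have hfac_ne : ∀ (j : Fin d) (n : ℕ),
      (Pit f n j).comp (Polynomial.X ^ B ^ (j : ℕ)) ≠ 0 := by
    intro j n
    apply Polynomial.ne_zero_of_natDegree_gt (n := 0)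
    rw [hfac_deg]
    exact Nat.mul_pos (pow_pos (hq j) n) (pow_pos hBpos _)
  have hφg : ∀ α, φ (g α) = ∏ p : Fin d × Fin N,
      ((Pit f ((p.2 : Fin N) : ℕ) p.1).comp
        (Polynomial.X ^ B ^ ((p.1 : Fin d) : ℕ))) ^ ((c α p.1 p.2 : ℕ)) := by
    intro α
    rw [map_prod]
    refine Finset.prod_congr rfl fun p _ => ?_
    rw [map_pow, polyIter_split, hφuni]
  have hφg_ne : ∀ α, φ (g α) ≠ 0 := by
    intro α
    rw [hφg]
    exact Finset.prod_ne_zero_iff.mpr fun p _ => pow_ne_zero _ (hfac_ne _ _)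
  have hφg_deg : ∀ α, (φ (g α)).natDegree = ∑ j : Fin d, (α j : ℕ) * B ^ (j : ℕ) := by
    intro α
    rw [hφg, Polynomial.natDegree_prod _ _ (fun p _ => pow_ne_zero _ (hfac_ne _ _))]
    have step : ∀ p : Fin d × Fin N,
        ((((Pit f ((p.2 : Fin N) : ℕ) p.1).comp
          (Polynomial.X ^ B ^ ((p.1 : Fin d) : ℕ))) ^ ((c α p.1 p.2 : ℕ))).natDegree)
          = (q p.1 ^ ((p.2 : Fin N) : ℕ) * ((c α p.1 p.2 : ℕ))) * B ^ ((p.1 : Fin d) : ℕ) := by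
      intro p
      rw [Polynomial.natDegree_pow, hfac_deg]
      ring
    rw [Finset.sum_congr rfl fun p _ => step p, Fintype.sum_prod_type]
    refine Finset.sum_congr rfl fun j _ => ?_
    dsimp only
    rw [← Finset.sum_mul]
    congr 1
    have : ∑ n : Fin N, q j ^ ((n : Fin N) : ℕ) * ((c α j n : ℕ))
        = ∑ n ∈ Finset.range N, q j ^ n * ((α j : ℕ) / q j ^ n % q j) := by
      rw [Finset.sum_range fun n => q j ^ n * ((α j : ℕ) / q j ^ n % q j)]
    rw [this, digit_sum, Nat.mod_eq_of_lt (α j).isLt]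
  have hinj : Function.Injective fun α : ι => (φ (g α)).natDegree := by
    intro α β h
    simp only [hφg_deg] at h
    have := base_inj (fun j => (α j : ℕ)) (fun j => (β j : ℕ))
      (fun j => lt_of_lt_of_le (α j).isLt (hB1 j))
      (fun j => lt_of_lt_of_le (β j).isLt (hB1 j)) h
    funext j
    exact Fin.ext (congrFun this j)
  have hli : LinearIndependent K fun α : ι => φ (g α) :=
    linearIndependent_of_natDegree_inj _ hφg_ne hinj
  have hlig : LinearIndependent K g := LinearIndependent.of_comp φ.toLinearMap hli
  haveI : Module.Finite K S := FiniteDimensional.span_of_finite K (Set.finite_range _)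
  let g' : ι → S := fun α => ⟨g α, hg_mem α⟩
  have hlig' : LinearIndependent K g' :=
    LinearIndependent.of_comp S.subtype (by exact hlig)
  have hcard := hlig'.fintype_card_le_finrank
  rw [satRank]
  calc ∏ j : Fin d, q j ^ N = Fintype.card ι := by
        rw [Fintype.card_pi]
        exact (Finset.prod_congr rfl fun j _ => (Fintype.card_fin _).symm)
    _ ≤ _ := hcard

end Lower

section Upper
variable {K : Type*} [Field K] {d : ℕ}

lemma satRank_upper (f : Fin d → Polynomial K) (hq : ∀ j, 0 < (f j).natDegree) (L N : ℕ) :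
    satRank (fun j => Polynomial.eval₂ MvPolynomial.C (MvPolynomial.X j) (f j)) L N ≤
      ∏ j : Fin d, (d * N * (L + 1) * (L + 1) * (f j).natDegree ^ N + 1) := by
  classical
  set q : Fin d → ℕ := fun j => (f j).natDegree with hqdef
  set F : Fin d → MvPolynomial (Fin d) K :=
    (fun j => Polynomial.eval₂ MvPolynomial.C (MvPolynomial.X j) (f j)) with hF
  set E : Fin d → ℕ := fun j => d * N * (L + 1) * (L + 1) * q j ^ N with hE
  have hbound : ∀ (s : Finset (Fin d × Fin N × Fin L)) (j : Fin d),
      degreeOf j (∏ t ∈ s, (polyIter F (t.2.1 : ℕ) t.1) ^ ((t.2.2 : ℕ))) ≤ E j := by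
    intro s j
    refine le_trans (MvPolynomial.degreeOf_prod_le j s _) ?_
    have hterm : ∀ t : Fin d × Fin N × Fin L,
        degreeOf j ((polyIter F ((t.2.1 : Fin N) : ℕ) t.1) ^ (((t.2.2 : Fin L)) : ℕ)) ≤
          (L + 1) * q j ^ N := by
      intro t
      refine le_trans (MvPolynomial.degreeOf_pow_le j _ _) ?_
      rw [polyIter_split]
      rcases eq_or_ne j t.1 with h | h
      · rw [← h]
        refine Nat.mul_le_mul (le_of_lt (Nat.lt_succ_of_lt t.2.2.isLt)) ?_
        refine le_trans (degreeOf_uni_self_le j _) ?_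
        rw [Pit_natDegree]
        exact Nat.pow_le_pow_right (hq j) (le_of_lt t.2.1.isLt)
      · rw [degreeOf_uni_ne t.1 j _ h, Nat.mul_zero]
        exact Nat.zero_le _
    calc ∑ t ∈ s, degreeOf j ((polyIter F ((t.2.1 : Fin N) : ℕ) t.1) ^ (((t.2.2 : Fin L)) : ℕ))
        ≤ ∑ _t ∈ s, (L + 1) * q j ^ N := Finset.sum_le_sum fun t _ => hterm t
      _ = s.card * ((L + 1) * q j ^ N) := by rw [Finset.sum_const, smul_eq_mul]
      _ ≤ (d * N * (L + 1)) * ((L + 1) * q j ^ N) := by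
          refine Nat.mul_le_mul_right _ ?_
          refine le_trans (Finset.card_le_univ s) ?_
          simp only [Finset.card_univ, Fintype.card_prod, Fintype.card_fin]
          rw [mul_assoc]
          exact Nat.mul_le_mul_left _ (Nat.mul_le_mul_left _ (Nat.le_succ L))
      _ = E j := by rw [hE]; ring
  set T : Finset (Fin d →₀ ℕ) := Finset.image
      (fun v : (∀ j : Fin d, Fin (E j + 1)) =>
        Finsupp.equivFunOnFinite.symm (fun j => ((v j : ℕ))))
      Finset.univ with hT
  have hTmem : ∀ m : Fin d →₀ ℕ, (∀ j, m j ≤ E j) → m ∈ T := by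
    intro m hm
    refine Finset.mem_image.mpr ⟨fun j => ⟨m j, Nat.lt_succ_of_le (hm j)⟩, Finset.mem_univ _, ?_⟩
    exact Finsupp.equivFunOnFinite_symm_coe m
  set M : Finset (MvPolynomial (Fin d) K) := T.image (fun m => monomial m (1 : K)) with hM
  have hspan : Submodule.span K (Set.range fun s : Finset (Fin d × Fin N × Fin L) =>
      ∏ t ∈ s, (polyIter F (t.2.1 : ℕ) t.1) ^ ((t.2.2 : ℕ))) ≤
      Submodule.span K (M : Set (MvPolynomial (Fin d) K)) := by
    rw [Submodule.span_le]
    rintro _ ⟨s, rfl⟩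
    show (∏ t ∈ s, (polyIter F (t.2.1 : ℕ) t.1) ^ ((t.2.2 : ℕ))) ∈ _
    set p := ∏ t ∈ s, (polyIter F (t.2.1 : ℕ) t.1) ^ ((t.2.2 : ℕ)) with hp
    rw [← MvPolynomial.support_sum_monomial_coeff p]
    apply Submodule.sum_mem
    intro m hm
    have h1 : monomial m (MvPolynomial.coeff m p) =
        (MvPolynomial.coeff m p) • monomial m (1 : K) := by
      rw [MvPolynomial.smul_monomial, smul_eq_mul, mul_one]
    rw [h1]
    refine Submodule.smul_mem _ _ (Submodule.subset_span ?_)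
    refine Finset.mem_coe.mpr (Finset.mem_image_of_mem _ (hTmem m fun j => ?_))
    exact le_trans (MvPolynomial.monomial_le_degreeOf j hm) (hbound s j)
  haveI : Module.Finite K (Submodule.span K (M : Set (MvPolynomial (Fin d) K))) :=
    FiniteDimensional.span_of_finite K M.finite_toSet
  calc satRank F L N
      ≤ Module.finrank K (Submodule.span K (M : Set (MvPolynomial (Fin d) K))) :=
        Submodule.finrank_mono hspan
    _ ≤ M.card := finrank_span_finset_le_card M
    _ ≤ T.card := Finset.card_image_le
    _ ≤ Fintype.card (∀ j : Fin d, Fin (E j + 1)) := by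
        rw [hT]
        exact le_trans Finset.card_image_le (le_of_eq Finset.card_univ)
    _ = ∏ j : Fin d, (E j + 1) := by
        rw [Fintype.card_pi]
        exact Finset.prod_congr rfl fun j _ => Fintype.card_fin _

end Upper

section Main
variable {K : Type*} [Field K]

theorem satDeg_split (d : ℕ) (hd : 0 < d) (f : Fin d → Polynomial K)
    (hq : ∀ j, 0 < (f j).natDegree) :
    satDeg (fun j : Fin d => Polynomial.eval₂ MvPolynomial.C (MvPolynomial.X j) (f j)) =
      (∏ j : Fin d, ((f j).natDegree : ℝ)) ^ ((d : ℝ)⁻¹) := by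
  classical
  set q : Fin d → ℕ := fun j => (f j).natDegree with hqdef
  set F : Fin d → MvPolynomial (Fin d) K :=
    (fun j => Polynomial.eval₂ MvPolynomial.C (MvPolynomial.X j) (f j)) with hF
  set P : ℝ := ∏ j : Fin d, ((q j : ℕ) : ℝ) with hP
  have hPnat : P = ((∏ j : Fin d, q j : ℕ) : ℝ) := by
    rw [hP]; push_cast; rfl
  have hP1 : 1 ≤ P := by
    rw [hPnat]
    have h : (1 : ℕ) ≤ ∏ j : Fin d, q j :=
      Finset.one_le_prod' (fun j _ => hq j)
    exact_mod_cast h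
  have hPpos : 0 < P := lt_of_lt_of_le zero_lt_one hP1
  set κ : ℝ := P ^ ((d : ℝ)⁻¹) with hκ
  have hκpos : 0 < κ := Real.rpow_pos_of_pos hPpos _
  have hdR : ((d : ℝ)) ≠ 0 := Nat.cast_ne_zero.mpr hd.ne'
  have hκd : κ ^ d = P := by
    rw [hκ, ← Real.rpow_natCast (P ^ ((d : ℝ)⁻¹)) d, ← Real.rpow_mul (le_of_lt hPpos),
      inv_mul_cancel₀ hdR, Real.rpow_one]
  have hPcast : ∀ N : ℕ, P ^ N = ((∏ j : Fin d, q j ^ N : ℕ) : ℝ) := by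
    intro N
    rw [hP]
    push_cast
    rw [← Finset.prod_pow]
  -- all c ∈ (0, κ) are in the defining set
  have hmemS : ∀ c : ℝ, 0 < c → c < κ →
      (0 < c ∧ ∃ L : ℕ, ∀ᶠ N : ℕ in atTop,
        (c ^ (d * N) : ℝ) < (satRank F L N : ℝ)) := by
    intro c hc0 hcκ
    refine ⟨hc0, Finset.univ.sup q, ?_⟩
    filter_upwards [eventually_ge_atTop 1] with N hN
    have h2 : (c ^ d) ^ N < (κ ^ d) ^ N :=
      pow_lt_pow_left₀ (pow_lt_pow_left₀ hcκ hc0.le hd.ne') (pow_nonneg hc0.le d) (by omega)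
    have h4 : ((∏ j : Fin d, q j ^ N : ℕ) : ℝ) ≤ (satRank F (Finset.univ.sup q) N : ℝ) :=
      Nat.cast_le.mpr (satRank_lower f hq N)
    calc (c ^ (d * N) : ℝ) = (c ^ d) ^ N := by rw [pow_mul]
      _ < (κ ^ d) ^ N := h2
      _ = ((∏ j : Fin d, q j ^ N : ℕ) : ℝ) := by rw [hκd, hPcast]
      _ ≤ _ := h4
  -- no c > κ is in the defining set
  have hnotS : ∀ c : ℝ, κ < c →
      ¬(0 < c ∧ ∃ L : ℕ, ∀ᶠ N : ℕ in atTop,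
        (c ^ (d * N) : ℝ) < (satRank F L N : ℝ)) := by
    rintro c hκc ⟨hc0, L, hev⟩
    set r : ℝ := c ^ d / P with hr
    have hP_lt : P < c ^ d := by
      rw [← hκd]
      exact pow_lt_pow_left₀ hκc hκpos.le hd.ne'
    have hr1 : 1 < r := (one_lt_div hPpos).mpr hP_lt
    set C : ℕ := 2 * d * (L + 1) * (L + 1) with hC
    have hCposN : 0 < C := by
      rw [hC]
      exact Nat.mul_pos (Nat.mul_pos (Nat.mul_pos (by omega) hd) (Nat.succ_pos L))
        (Nat.succ_pos L)
    have hC1 : (1 : ℝ) ≤ (C : ℝ) := by exact_mod_cast hCposN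
    have hCpos : (0 : ℝ) < (C : ℝ) ^ d := by positivity
    -- upper bound on satRank
    have hub : ∀ N : ℕ, 1 ≤ N →
        (satRank F L N : ℝ) ≤ (C : ℝ) ^ d * (N : ℝ) ^ d * P ^ N := by
      intro N hN
      have h1 : satRank F L N ≤ ∏ j : Fin d, (d * N * (L + 1) * (L + 1) * q j ^ N + 1) :=
        satRank_upper f hq L N
      have h2 : ∀ j : Fin d, d * N * (L + 1) * (L + 1) * q j ^ N + 1 ≤ C * N * q j ^ N := by
        intro j
        have hE1 : 1 ≤ d * N * (L + 1) * (L + 1) * q j ^ N :=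
          Nat.mul_pos (Nat.mul_pos (Nat.mul_pos (Nat.mul_pos hd (by omega)) (Nat.succ_pos L))
            (Nat.succ_pos L)) (Nat.pow_pos (n := N) (hq j))
        calc d * N * (L + 1) * (L + 1) * q j ^ N + 1
            ≤ 2 * (d * N * (L + 1) * (L + 1) * q j ^ N) := by omega
          _ = C * N * q j ^ N := by rw [hC]; ring
      have h3 : satRank F L N ≤ ∏ j : Fin d, (C * N * q j ^ N) :=
        le_trans h1 (Finset.prod_le_prod' fun j _ => h2 j)
      have h4 : ((∏ j : Fin d, (C * N * q j ^ N) : ℕ) : ℝ)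
          = (C : ℝ) ^ d * (N : ℝ) ^ d * P ^ N := by
        push_cast
        rw [Finset.prod_mul_distrib, Finset.prod_mul_distrib, Finset.prod_const,
          Finset.prod_const, Finset.card_univ, Fintype.card_fin, hPcast]
        push_cast
        ring
      calc (satRank F L N : ℝ) ≤ ((∏ j : Fin d, (C * N * q j ^ N) : ℕ) : ℝ) :=
            Nat.cast_le.mpr h3
        _ = _ := h4
    -- growth domination
    have hgrow : ∀ᶠ N : ℕ in atTop,
        (C : ℝ) ^ d * (N : ℝ) ^ d * P ^ N < c ^ (d * N) := by
      have htend := tendsto_pow_const_div_const_pow_of_one_lt d hr1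
      have hev2 := htend.eventually (gt_mem_nhds (inv_pos.mpr hCpos))
      filter_upwards [hev2] with N hN
      have hrN : (0 : ℝ) < r ^ N := pow_pos (lt_trans zero_lt_one hr1) N
      have hlt : (C : ℝ) ^ d * (N : ℝ) ^ d < r ^ N := by
        have := (div_lt_iff₀ hrN).mp hN
        calc (C : ℝ) ^ d * (N : ℝ) ^ d < (C : ℝ) ^ d * (((C : ℝ) ^ d)⁻¹ * r ^ N) := by
              apply mul_lt_mul_of_pos_left _ hCpos
              exact this
          _ = r ^ N := by field_simp
      have hPN : (0 : ℝ) < P ^ N := pow_pos hPpos N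
      calc (C : ℝ) ^ d * (N : ℝ) ^ d * P ^ N < r ^ N * P ^ N :=
            mul_lt_mul_of_pos_right hlt hPN
        _ = c ^ (d * N) := by
            rw [hr, div_pow, pow_mul]
            field_simp
    have hcontr : ∀ᶠ N : ℕ in atTop, False := by
      filter_upwards [hev, hgrow, eventually_ge_atTop 1] with N h1 h2 h3
      exact absurd (lt_trans h1 (lt_of_le_of_lt (hub N h3) h2)) (lt_irrefl _)
    exact hcontr.exists.elim fun _ h => h
  -- conclude by computing the sSup
  have hbdd : BddAbove {c : ℝ | 0 < c ∧ ∃ L : ℕ, ∀ᶠ N : ℕ in atTop,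
      (c ^ (d * N) : ℝ) < (satRank F L N : ℝ)} :=
    ⟨κ, fun c hc => not_lt.mp fun h => hnotS c h hc⟩
  have hne : (κ / 2) ∈ {c : ℝ | 0 < c ∧ ∃ L : ℕ, ∀ᶠ N : ℕ in atTop,
      (c ^ (d * N) : ℝ) < (satRank F L N : ℝ)} :=
    hmemS (κ / 2) (by positivity) (by linarith)
  rw [satDeg]
  apply le_antisymm
  · exact csSup_le ⟨κ / 2, hne⟩ fun c hc => not_lt.mp fun h => hnotS c h hc
  · refine le_of_forall_lt fun b hb => ?_
    set cb : ℝ := max (κ / 2) ((b + κ) / 2) with hcb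
    have hcb0 : 0 < cb := lt_of_lt_of_le (by positivity) (le_max_left _ _)
    have hcbκ : cb < κ := max_lt (by linarith) (by linarith)
    have hbcb : b < cb := lt_of_lt_of_le (by linarith) (le_max_right _ _)
    exact lt_of_lt_of_le hbcb (le_csSup hbdd (hmemS cb hcb0 hcbκ))

end Main

end SplitSat

/-- the basic example of section 6.1 of the paper. For a split map
`F = (f_1(x_1), …, f_d(x_d))` with `q_j := deg f_j > 0`, the saturation degree is
`κ = (q_1 ⋯ q_d)^{1/d}` while the dynamic degree is `δ = max_j q_j`. -/
theorem sat_deg_and_dyn_deg_of_split_map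
    {K : Type*} [Field K] (d : ℕ) (hd : 0 < d)
    (f : Fin d → Polynomial K) (hq : ∀ j, 0 < (f j).natDegree) :
    satDeg (fun j : Fin d => Polynomial.eval₂ MvPolynomial.C (MvPolynomial.X j) (f j)) =
      (∏ j : Fin d, ((f j).natDegree : ℝ)) ^ ((d : ℝ)⁻¹) ∧
    Tendsto (fun n : ℕ =>
        ((polyDeg (polyIter
          (fun j : Fin d => Polynomial.eval₂ MvPolynomial.C (MvPolynomial.X j) (f j)) n) : ℝ))
          ^ ((n : ℝ)⁻¹)) atTop
      (nhds ((Finset.univ.sup fun j : Fin d => (f j).natDegree : ℕ) : ℝ)) := by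
  exact ⟨SplitSat.satDeg_split d hd f hq, SplitSat.dyn_deg_tendsto f hq hd⟩

end
end

section
/- Let F : K^d → K^d be an additive polynomial mapping over K, P ∈ K^d, and s_1 < s_2 natural numbers. Set Q := F^{∘s_2}(P) − F^{∘s_1}(P). Then the arithmetic degrees satisfy α(Q) ≤ α(P). -/
open MvPolynomial Filter

noncomputable section

variable {K : Type*} [Field K]

namespace ArithDegAux

variable {K : Type*} [Field K] (Pl : PlaceData K)

lemma ordMinus_nonpos (v : Pl.Pt) (a : K) : Pl.ordMinus v a ≤ 0 := by
  unfold PlaceData.ordMinus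
  split
  · exact le_refl 0
  · exact min_le_right _ _

/-- `w v a = (-ord_v^-(a)).toNat`. -/
def w (v : Pl.Pt) (a : K) : ℕ := (-(Pl.ordMinus v a)).toNat

lemma w_coe (v : Pl.Pt) (a : K) : (w Pl v a : ℤ) = -(Pl.ordMinus v a) :=
  Int.toNat_of_nonneg (by linarith [ordMinus_nonpos Pl v a])

lemma ordMinus_zero (v : Pl.Pt) : Pl.ordMinus v 0 = 0 := by
  simp [PlaceData.ordMinus]

lemma w_zero (v : Pl.Pt) : w Pl v (0 : K) = 0 := by
  simp [w, ordMinus_zero]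

lemma w_one (v : Pl.Pt) : w Pl v (1 : K) = 0 := by
  simp [w, PlaceData.ordMinus, Pl.ord_one v]

lemma ord_neg (v : Pl.Pt) (a : K) (ha : a ≠ 0) : Pl.ord v (-a) = Pl.ord v a := by
  by_cases h1 : (-1 : K) = 1
  · have haa : -a = a := by
      have := congrArg (· * a) h1
      simpa using this
    rw [haa]
  · have hm1 : (-1 : K) ≠ 0 := by
      intro h; apply h1; rw [show (-1:K) = 0 from h]; simpa using h.symm
    have h2 : Pl.ord v ((-1 : K) * (-1 : K)) = Pl.ord v (-1) + Pl.ord v (-1) :=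
      Pl.ord_mul v _ _ hm1 hm1
    rw [show ((-1 : K) * (-1 : K)) = 1 by ring, Pl.ord_one v] at h2
    have h3 : Pl.ord v (-1 : K) = 0 := by omega
    rw [show -a = (-1 : K) * a by ring, Pl.ord_mul v _ _ hm1 ha, h3, zero_add]

lemma ordMinus_neg (v : Pl.Pt) (a : K) : Pl.ordMinus v (-a) = Pl.ordMinus v a := by
  by_cases ha : a = 0
  · simp [ha]
  · unfold PlaceData.ordMinus
    rw [if_neg (by simpa using ha), if_neg ha, ord_neg Pl v a ha]

lemma min_ordMinus_le_sub (v : Pl.Pt) (a b : K) :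
    min (Pl.ordMinus v a) (Pl.ordMinus v b) ≤ Pl.ordMinus v (a - b) := by
  by_cases hab : a - b = 0
  · rw [hab, ordMinus_zero]
    exact le_trans (min_le_left _ _) (ordMinus_nonpos Pl v a)
  by_cases ha : a = 0
  · rw [show a - b = -b by rw [ha]; ring, ordMinus_neg]
    exact min_le_right _ _
  by_cases hb : b = 0
  · rw [show a - b = a by rw [hb]; ring]
    exact min_le_left _ _
  · have hnb : (-b : K) ≠ 0 := by simpa using hb
    have h := Pl.min_le_ord_add v a (-b) ha hnb (by rw [← sub_eq_add_neg]; exact hab)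
    rw [ord_neg Pl v b hb] at h
    unfold PlaceData.ordMinus
    rw [if_neg hab, if_neg ha, if_neg hb, ← sub_eq_add_neg] at *
    omega

lemma w_sub_le (v : Pl.Pt) (a b : K) : w Pl v (a - b) ≤ max (w Pl v a) (w Pl v b) := by
  have h := min_ordMinus_le_sub Pl v a b
  have h1 := w_coe Pl v a; have h2 := w_coe Pl v b; have h3 := w_coe Pl v (a - b)
  zify
  omega

lemma w_add_le (v : Pl.Pt) (a b : K) : w Pl v (a + b) ≤ max (w Pl v a) (w Pl v b) := by
  have h := w_sub_le Pl v a (-b)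
  rw [sub_neg_eq_add] at h
  rw [show w Pl v (-b) = w Pl v b by unfold w; rw [ordMinus_neg]] at h
  exact h

lemma ordMinus_mul_ge (v : Pl.Pt) (a b : K) :
    Pl.ordMinus v a + Pl.ordMinus v b ≤ Pl.ordMinus v (a * b) := by
  by_cases ha : a = 0
  · simp [ha, ordMinus_zero, ordMinus_nonpos]
  by_cases hb : b = 0
  · simp [hb, ordMinus_zero, ordMinus_nonpos]
  · have hab : a * b ≠ 0 := mul_ne_zero ha hb
    unfold PlaceData.ordMinus
    rw [if_neg ha, if_neg hb, if_neg hab, Pl.ord_mul v a b ha hb]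
    omega

lemma w_mul_le (v : Pl.Pt) (a b : K) : w Pl v (a * b) ≤ w Pl v a + w Pl v b := by
  have h := ordMinus_mul_ge Pl v a b
  have h1 := w_coe Pl v a; have h2 := w_coe Pl v b; have h3 := w_coe Pl v (a * b)
  zify
  omega

lemma w_pow_le (v : Pl.Pt) (a : K) (m : ℕ) : w Pl v (a ^ m) ≤ m * w Pl v a := by
  induction m with
  | zero => simp [w_one]
  | succ m ih =>
      calc w Pl v (a ^ (m + 1)) = w Pl v (a ^ m * a) := by rw [pow_succ]
        _ ≤ w Pl v (a ^ m) + w Pl v a := w_mul_le Pl v _ _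
        _ ≤ m * w Pl v a + w Pl v a := by omega
        _ = (m + 1) * w Pl v a := by ring

lemma w_sum_le {ι : Type*} (v : Pl.Pt) (s : Finset ι) (f : ι → K) :
    w Pl v (∑ i ∈ s, f i) ≤ s.sup fun i => w Pl v (f i) := by
  classical
  induction s using Finset.cons_induction with
  | empty => simp [w_zero]
  | cons i s his ih =>
      rw [Finset.sum_cons, Finset.sup_cons]
      exact le_trans (w_add_le Pl v _ _) (max_le_max (le_refl _) ih)

/-- `g v x = max_j w v (x j)`, so that `Pl.h x = ∑ᶠ v, g v x * log |k(v)|`. -/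
def g {d : ℕ} (v : Pl.Pt) (x : Fin d → K) : ℕ :=
  Finset.univ.sup fun j => w Pl v (x j)

lemma h_eq {d : ℕ} (x : Fin d → K) :
    Pl.h x = ∑ᶠ v, (g Pl v x : ℝ) * Real.log (Pl.resCard v) := rfl

lemma log_resCard_pos (v : Pl.Pt) : 0 < Real.log (Pl.resCard v) := by
  apply Real.log_pos
  have := Pl.two_le_resCard v
  exact_mod_cast by exact_mod_cast (by exact_mod_cast this : (2:ℕ) ≤ Pl.resCard v)

lemma w_ne_zero {v : Pl.Pt} {a : K} (h : w Pl v a ≠ 0) : a ≠ 0 ∧ Pl.ord v a ≠ 0 := by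
  by_cases ha : a = 0
  · exact absurd (by simp [ha, w_zero] : w Pl v a = 0) h
  · refine ⟨ha, fun h0 => h ?_⟩
    simp [w, PlaceData.ordMinus, ha, h0]

lemma finite_support_sup {ι : Type*} [Fintype ι] (c : ι → K) :
    {v : Pl.Pt | (Finset.univ.sup fun t => w Pl v (c t)) ≠ 0}.Finite := by
  classical
  apply Set.Finite.subset
    (Set.finite_iUnion (fun t : ι => ?_) :
      (⋃ t : ι, {v : Pl.Pt | c t ≠ 0 ∧ Pl.ord v (c t) ≠ 0}).Finite)
  · intro v hv
    simp only [Set.mem_setOf_eq] at hv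
    obtain ⟨t, ht⟩ : ∃ t, w Pl v (c t) ≠ 0 := by
      by_contra hc
      push_neg at hc
      exact hv (by simp [hc])
    exact Set.mem_iUnion.2 ⟨t, w_ne_zero Pl ht⟩
  · by_cases hc : c t = 0
    · convert Set.finite_empty using 1
      ext v; simp [hc]
    · exact (Pl.finite_mulSupport (c t) hc).subset fun v hv => hv.2

lemma finite_support_g {d : ℕ} (x : Fin d → K) : {v : Pl.Pt | g Pl v x ≠ 0}.Finite :=
  finite_support_sup Pl x

lemma support_term_subset {φ : Pl.Pt → ℕ} :
    (Function.support fun v => (φ v : ℝ) * Real.log (Pl.resCard v)) ⊆ {v | φ v ≠ 0} := by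
  intro v hv
  simp only [Function.mem_support] at hv
  intro h0
  exact hv (by simp [h0])

lemma finsum_log_mono {φ ψ : Pl.Pt → ℕ} (hψ : {v | ψ v ≠ 0}.Finite)
    (hle : ∀ v, φ v ≤ ψ v) :
    ∑ᶠ v, (φ v : ℝ) * Real.log (Pl.resCard v) ≤
      ∑ᶠ v, (ψ v : ℝ) * Real.log (Pl.resCard v) := by
  classical
  have hsub : {v : Pl.Pt | φ v ≠ 0} ⊆ {v | ψ v ≠ 0} := by
    intro v hv h0
    exact hv (Nat.le_antisymm (h0 ▸ hle v) (Nat.zero_le _))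
  rw [finsum_eq_sum_of_support_subset (s := hψ.toFinset)
      _ (le_trans (support_term_subset Pl) (by intro v hv; simpa using hsub hv)),
    finsum_eq_sum_of_support_subset (s := hψ.toFinset)
      _ (le_trans (support_term_subset Pl) (by intro v hv; simpa using hv))]
  apply Finset.sum_le_sum
  intro v _
  have := (log_resCard_pos Pl v).le
  have := hle v
  apply mul_le_mul_of_nonneg_right _ (log_resCard_pos Pl v).le
  exact_mod_cast hle v

lemma finsum_log_nonneg (φ : Pl.Pt → ℕ) :
    0 ≤ ∑ᶠ v, (φ v : ℝ) * Real.log (Pl.resCard v) :=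
  finsum_nonneg fun v => mul_nonneg (by positivity) (log_resCard_pos Pl v).le

lemma h_nonneg {d : ℕ} (x : Fin d → K) : 0 ≤ Pl.h x := by
  rw [h_eq]; exact finsum_log_nonneg Pl _

lemma finsum_log_add {φ ψ : Pl.Pt → ℕ} (hφ : {v | φ v ≠ 0}.Finite)
    (hψ : {v | ψ v ≠ 0}.Finite) :
    ∑ᶠ v, ((φ v + ψ v : ℕ) : ℝ) * Real.log (Pl.resCard v) =
      (∑ᶠ v, (φ v : ℝ) * Real.log (Pl.resCard v)) +
        ∑ᶠ v, (ψ v : ℝ) * Real.log (Pl.resCard v) := by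
  rw [← finsum_add_distrib (hφ.subset (support_term_subset Pl))
      (hψ.subset (support_term_subset Pl))]
  apply finsum_congr
  intro v
  push_cast
  ring

lemma h_sub_le {d : ℕ} (x y : Fin d → K) : Pl.h (x - y) ≤ Pl.h x + Pl.h y := by
  rw [h_eq, h_eq, h_eq, ← finsum_log_add Pl (finite_support_g Pl x) (finite_support_g Pl y)]
  apply finsum_log_mono Pl
  · apply Set.Finite.subset ((finite_support_g Pl x).union (finite_support_g Pl y))
    intro v hv
    simp only [Set.mem_setOf_eq] at hv ⊢
    by_contra hc
    simp only [Set.mem_union, Set.mem_setOf_eq, not_or, not_not] at hc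
    exact hv (by omega)
  · intro v
    apply Finset.sup_le
    intro j _
    calc w Pl v ((x - y) j) = w Pl v (x j - y j) := rfl
      _ ≤ max (w Pl v (x j)) (w Pl v (y j)) := w_sub_le Pl v _ _
      _ ≤ g Pl v x + g Pl v y := by
        have hx : w Pl v (x j) ≤ g Pl v x :=
          Finset.le_sup (f := fun j => w Pl v (x j)) (Finset.mem_univ j)
        have hy : w Pl v (y j) ≤ g Pl v y :=
          Finset.le_sup (f := fun j => w Pl v (y j)) (Finset.mem_univ j)
        omega

lemma exists_height_bound {p d : ℕ} (hp : p.Prime) (F : Fin d → MvPolynomial (Fin d) K)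
    (hFadd : ∀ j, IsAddPoly p (F j)) :
    ∃ (D : ℕ) (C : ℝ), 1 ≤ D ∧ 0 ≤ C ∧
      ∀ x : Fin d → K, Pl.h (polyMapEval F x) ≤ D * Pl.h x + C := by
  classical
  choose r a hra using hFadd
  set R := Finset.univ.sup r with hR
  set A : Pl.Pt → ℕ := fun v =>
    Finset.univ.sup fun t : Fin d × Fin (R + 1) × Fin d => w Pl v (a t.1 t.2.1 t.2.2) with hA
  have hAfin : {v : Pl.Pt | A v ≠ 0}.Finite :=
    finite_support_sup Pl (fun t : Fin d × Fin (R + 1) × Fin d => a t.1 t.2.1 t.2.2)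
  refine ⟨p ^ R, ∑ᶠ v, (A v : ℝ) * Real.log (Pl.resCard v),
    Nat.one_le_pow _ _ hp.pos, finsum_log_nonneg Pl _, fun x => ?_⟩
  have hpt : ∀ v, g Pl v (polyMapEval F x) ≤ A v + p ^ R * g Pl v x := by
    intro v
    apply Finset.sup_le
    intro j _
    have hev : (polyMapEval F x) j =
        ∑ i ∈ Finset.range (r j + 1), ∑ k, a j i k * x k ^ p ^ i := by
      simp [polyMapEval, hra j]
    rw [hev]
    refine le_trans (w_sum_le Pl v _ _) (Finset.sup_le fun i hi => ?_)
    refine le_trans (w_sum_le Pl v _ _) (Finset.sup_le fun k _ => ?_)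
    have hiR : i ≤ R := le_trans (Nat.lt_succ_iff.mp (Finset.mem_range.mp hi))
      (Finset.le_sup (Finset.mem_univ j))
    have h1 : w Pl v (a j i k * x k ^ p ^ i) ≤ w Pl v (a j i k) + p ^ i * w Pl v (x k) :=
      le_trans (w_mul_le Pl v _ _) (by
        have := w_pow_le Pl v (x k) (p ^ i); omega)
    have h2 : w Pl v (a j i k) ≤ A v :=
      Finset.le_sup (f := fun t : Fin d × Fin (R + 1) × Fin d => w Pl v (a t.1 t.2.1 t.2.2))
        (Finset.mem_univ (j, ⟨i, by omega⟩, k))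
    have h3 : p ^ i * w Pl v (x k) ≤ p ^ R * g Pl v x := by
      apply Nat.mul_le_mul (Nat.pow_le_pow_right hp.pos hiR)
      exact Finset.le_sup (f := fun k => w Pl v (x k)) (Finset.mem_univ k)
    omega
  have hfin2 : {v : Pl.Pt | A v + p ^ R * g Pl v x ≠ 0}.Finite := by
    apply Set.Finite.subset (hAfin.union (finite_support_g Pl x))
    intro v hv
    simp only [Set.mem_setOf_eq] at hv
    by_contra hc
    simp only [Set.mem_union, Set.mem_setOf_eq, not_or, not_not] at hc
    exact hv (by rw [hc.1, hc.2]; ring)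
  calc Pl.h (polyMapEval F x)
      ≤ ∑ᶠ v, ((A v + p ^ R * g Pl v x : ℕ) : ℝ) * Real.log (Pl.resCard v) := by
        rw [h_eq]
        exact finsum_log_mono Pl hfin2 hpt
    _ = (∑ᶠ v, (A v : ℝ) * Real.log (Pl.resCard v)) +
        ∑ᶠ v, ((p ^ R * g Pl v x : ℕ) : ℝ) * Real.log (Pl.resCard v) :=
        finsum_log_add Pl hAfin (by
          apply Set.Finite.subset (finite_support_g Pl x)
          intro v hv
          simp only [Set.mem_setOf_eq] at hv ⊢
          intro h0; exact hv (by rw [h0]; ring))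
    _ ≤ (p ^ R : ℕ) * Pl.h x + ∑ᶠ v, (A v : ℝ) * Real.log (Pl.resCard v) := by
        have heq2 : ∑ᶠ v, ((p ^ R * g Pl v x : ℕ) : ℝ) * Real.log (Pl.resCard v) =
            ((p ^ R : ℕ) : ℝ) * Pl.h x := by
          rw [h_eq, mul_finsum _ _]
          apply finsum_congr
          intro v
          push_cast
          ring
        rw [heq2, add_comm]

lemma polyMapEval_sub {p : ℕ} (hp : p.Prime) [CharP K p] {d : ℕ}
    (F : Fin d → MvPolynomial (Fin d) K) (hFadd : ∀ j, IsAddPoly p (F j)) (x y : Fin d → K) :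
    polyMapEval F (x - y) = polyMapEval F x - polyMapEval F y := by
  haveI := Fact.mk hp
  funext j
  obtain ⟨r, a, hra⟩ := hFadd j
  simp only [polyMapEval, Pi.sub_apply, hra]
  simp only [map_sum, eval_mul, eval_C, eval_pow, eval_X, Pi.sub_apply]
  rw [← Finset.sum_sub_distrib]
  refine Finset.sum_congr rfl fun i _ => ?_
  rw [← Finset.sum_sub_distrib]
  refine Finset.sum_congr rfl fun k _ => ?_
  rw [sub_pow_char_pow, mul_sub]

lemma iterEval_sub {p : ℕ} (hp : p.Prime) [CharP K p] {d : ℕ}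
    (F : Fin d → MvPolynomial (Fin d) K) (hFadd : ∀ j, IsAddPoly p (F j)) (n : ℕ)
    (x y : Fin d → K) :
    (polyMapEval F)^[n] (x - y) = (polyMapEval F)^[n] x - (polyMapEval F)^[n] y := by
  induction n with
  | zero => simp
  | succ n ih =>
      rw [Function.iterate_succ_apply', Function.iterate_succ_apply',
        Function.iterate_succ_apply', ih, polyMapEval_sub hp F hFadd]

lemma limsup_rpow_le (u v : ℕ → ℝ) (hu0 : ∀ n, 0 ≤ u n) (hv0 : ∀ n, 0 ≤ v n)
    (M E : ℝ) (hM : 0 ≤ M) (hE : 1 ≤ E) (huM : ∀ n, u n ≤ M * E ^ n)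
    (s₁ s₂ : ℕ) (hv : ∀ n, v n ≤ u (n + s₂) + u (n + s₁)) :
    limsup (fun n : ℕ => (v n) ^ ((n : ℝ)⁻¹)) atTop ≤
      limsup (fun n : ℕ => (u n) ^ ((n : ℝ)⁻¹)) atTop := by
  have hE0 : (0 : ℝ) ≤ E := le_trans zero_le_one hE
  set b : ℕ → ℝ := fun n => (u n) ^ ((n : ℝ)⁻¹) with hb
  set a : ℕ → ℝ := fun n => (v n) ^ ((n : ℝ)⁻¹) with ha
  have hbbd : ∀ᶠ n in atTop, b n ≤ (M + 1) * E := by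
    filter_upwards [eventually_ge_atTop 1] with n hn
    have hn0 : (0 : ℝ) < n := by exact_mod_cast hn
    have hEn : (0 : ℝ) ≤ E ^ n := pow_nonneg hE0 n
    have hEn1 : (1 : ℝ) ≤ E ^ n := one_le_pow₀ hE
    calc b n ≤ ((M + 1) * E ^ n) ^ ((n : ℝ)⁻¹) :=
          Real.rpow_le_rpow (hu0 n) (le_trans (huM n) (by nlinarith)) (by positivity)
      _ = (M + 1) ^ ((n : ℝ)⁻¹) * (E ^ n) ^ ((n : ℝ)⁻¹) :=
          Real.mul_rpow (by linarith) hEn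
      _ ≤ (M + 1) * E := by
          have h1 : (M + 1) ^ ((n : ℝ)⁻¹) ≤ M + 1 := by
            calc (M + 1) ^ ((n : ℝ)⁻¹) ≤ (M + 1) ^ (1 : ℝ) :=
                Real.rpow_le_rpow_of_exponent_le (by linarith)
                  (by rw [inv_le_one_iff₀]; right; exact_mod_cast hn)
              _ = M + 1 := Real.rpow_one _
          have h2 : (E ^ n) ^ ((n : ℝ)⁻¹) = E := by
            rw [← Real.rpow_natCast E n, ← Real.rpow_mul hE0,
              mul_inv_cancel₀ hn0.ne', Real.rpow_one]
          rw [h2]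
          exact mul_le_mul_of_nonneg_right h1 hE0
  have hbdd : IsBoundedUnder (· ≤ ·) atTop b := ⟨(M + 1) * E, by simpa using hbbd⟩
  set L := limsup b atTop with hL
  have hL0 : 0 ≤ L :=
    le_limsup_of_frequently_le
      (Frequently.of_forall fun n => Real.rpow_nonneg (hu0 n) _) hbdd
  suffices hsuff : ∀ B : ℝ, L < B → limsup a atTop ≤ B by
    by_contra hc
    push_neg at hc
    have h := hsuff ((L + limsup a atTop) / 2) (by linarith)
    linarith
  intro B hB
  have hB0 : (0 : ℝ) < B := lt_of_le_of_lt hL0 hB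
  have hev : ∀ᶠ n in atTop, u n < B ^ n := by
    filter_upwards [eventually_lt_of_limsup_lt hB hbdd, eventually_ge_atTop 1] with n hn hn1
    have hn0 : (0 : ℝ) < n := by exact_mod_cast hn1
    have hun : u n = (b n) ^ (n : ℝ) := by
      rw [hb, ← Real.rpow_mul (hu0 n), inv_mul_cancel₀ hn0.ne', Real.rpow_one]
    rw [hun]
    calc (b n) ^ (n : ℝ) < B ^ (n : ℝ) :=
        Real.rpow_lt_rpow (Real.rpow_nonneg (hu0 n) _) hn hn0
      _ = B ^ n := Real.rpow_natCast B n
  set Kc := B ^ s₂ + B ^ s₁ with hKc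
  have hK0 : (0 : ℝ) < Kc := by positivity
  have hevv : ∀ᶠ n in atTop, v n ≤ Kc * B ^ n := by
    filter_upwards [(tendsto_add_atTop_nat s₁).eventually hev,
      (tendsto_add_atTop_nat s₂).eventually hev] with n h1 h2
    have h3 := hv n
    have e1 : B ^ (n + s₂) = B ^ s₂ * B ^ n := by rw [pow_add]; ring
    have e2 : B ^ (n + s₁) = B ^ s₁ * B ^ n := by rw [pow_add]; ring
    rw [e2] at h1
    rw [e1] at h2
    calc v n ≤ u (n + s₂) + u (n + s₁) := h3
      _ ≤ B ^ s₂ * B ^ n + B ^ s₁ * B ^ n := by linarith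
      _ = Kc * B ^ n := by rw [hKc]; ring
  have htends : Tendsto (fun n : ℕ => Kc ^ ((n : ℝ)⁻¹) * B) atTop (nhds B) := by
    have h1 : Tendsto (fun n : ℕ => Kc ^ ((n : ℝ)⁻¹)) atTop (nhds 1) := by
      have hinv : Tendsto (fun n : ℕ => ((n : ℝ))⁻¹) atTop (nhds 0) :=
        tendsto_inv_atTop_zero.comp tendsto_natCast_atTop_atTop
      have hlog : Tendsto (fun n : ℕ => Real.log Kc * (n : ℝ)⁻¹) atTop
          (nhds (Real.log Kc * 0)) := hinv.const_mul _
      rw [mul_zero] at hlog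
      have h2 := (Real.continuous_exp.tendsto 0).comp hlog
      rw [Real.exp_zero] at h2
      refine Tendsto.congr (fun n => ?_) h2
      simp only [Function.comp_apply]
      rw [Real.rpow_def_of_pos hK0]
    have h3 := h1.mul_const B
    rw [one_mul] at h3
    exact h3
  have hale : ∀ᶠ n in atTop, a n ≤ Kc ^ ((n : ℝ)⁻¹) * B := by
    filter_upwards [hevv, eventually_ge_atTop 1] with n hn hn1
    have hn0 : (0 : ℝ) < n := by exact_mod_cast hn1
    calc a n ≤ (Kc * B ^ n) ^ ((n : ℝ)⁻¹) :=
        Real.rpow_le_rpow (hv0 n) hn (by positivity)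
      _ = Kc ^ ((n : ℝ)⁻¹) * (B ^ n) ^ ((n : ℝ)⁻¹) :=
        Real.mul_rpow hK0.le (by positivity)
      _ = Kc ^ ((n : ℝ)⁻¹) * B := by
        rw [← Real.rpow_natCast B n, ← Real.rpow_mul hB0.le,
          mul_inv_cancel₀ hn0.ne', Real.rpow_one]
  calc limsup a atTop ≤ limsup (fun n : ℕ => Kc ^ ((n : ℝ)⁻¹) * B) atTop :=
      limsup_le_limsup hale
        (isCoboundedUnder_le_of_le atTop fun n => Real.rpow_nonneg (hv0 n) _)
        htends.isBoundedUnder_le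
    _ = B := htends.limsup_eq

end ArithDegAux

/-- section 4.1 of the paper. For an additive polynomial self-map `F` of
`K^d`, a point `P ∈ K^d` and `s_1 < s_2`, the point `Q := F^{∘s_2}(P) − F^{∘s_1}(P)`
satisfies `α(Q) ≤ α(P)` for the arithmetic degrees. -/
theorem arith_deg_of_orbit_difference_le
    {K : Type*} [Field K] (Pl : PlaceData K) (p d : ℕ) (hp : p.Prime) [CharP K p]
    (hd : 0 < d)
    (F : Fin d → MvPolynomial (Fin d) K) (hFadd : ∀ j, IsAddPoly p (F j))
    (P : Fin d → K) (s₁ s₂ : ℕ) (hs : s₁ < s₂) :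
    limsup (fun n : ℕ =>
        (Pl.h ((polyMapEval F)^[n] ((polyMapEval F)^[s₂] P - (polyMapEval F)^[s₁] P)))
          ^ ((n : ℝ)⁻¹)) atTop ≤
      limsup (fun n : ℕ => (Pl.h ((polyMapEval F)^[n] P)) ^ ((n : ℝ)⁻¹)) atTop := by
  classical
  obtain ⟨D, C, hD1, hC0, hbd⟩ := ArithDegAux.exists_height_bound Pl hp F hFadd
  have hu0 : ∀ n : ℕ, 0 ≤ Pl.h ((polyMapEval F)^[n] P) :=
    fun n => ArithDegAux.h_nonneg Pl _
  have hv0 : ∀ n : ℕ, 0 ≤ Pl.h ((polyMapEval F)^[n]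
      ((polyMapEval F)^[s₂] P - (polyMapEval F)^[s₁] P)) :=
    fun n => ArithDegAux.h_nonneg Pl _
  have hMnn : (0 : ℝ) ≤ Pl.h P + C := add_nonneg (ArithDegAux.h_nonneg Pl P) hC0
  have hE1 : (1 : ℝ) ≤ (D : ℝ) + 1 := by
    have : (1 : ℝ) ≤ (D : ℝ) := by exact_mod_cast hD1
    linarith
  have hstep : ∀ n : ℕ, Pl.h ((polyMapEval F)^[n + 1] P) ≤
      (D : ℝ) * Pl.h ((polyMapEval F)^[n] P) + C := by
    intro n
    have h := hbd ((polyMapEval F)^[n] P)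
    rw [Function.iterate_succ_apply']
    exact h
  have huM : ∀ n : ℕ, Pl.h ((polyMapEval F)^[n] P) ≤ (Pl.h P + C) * ((D : ℝ) + 1) ^ n := by
    intro n
    induction n with
    | zero => simpa using by linarith [ArithDegAux.h_nonneg Pl P]
    | succ n ih =>
        have hEn1 : (1 : ℝ) ≤ ((D : ℝ) + 1) ^ n := one_le_pow₀ hE1
        have hD0 : (0 : ℝ) ≤ (D : ℝ) := by positivity
        calc Pl.h ((polyMapEval F)^[n + 1] P)
            ≤ (D : ℝ) * Pl.h ((polyMapEval F)^[n] P) + C := hstep n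
          _ ≤ (D : ℝ) * ((Pl.h P + C) * ((D : ℝ) + 1) ^ n) + (Pl.h P + C) * ((D : ℝ) + 1) ^ n :=
              by nlinarith [hu0 n, ArithDegAux.h_nonneg Pl P]
          _ = (Pl.h P + C) * ((D : ℝ) + 1) ^ (n + 1) := by rw [pow_succ]; ring
  have hvle : ∀ n : ℕ, Pl.h ((polyMapEval F)^[n]
      ((polyMapEval F)^[s₂] P - (polyMapEval F)^[s₁] P)) ≤
      Pl.h ((polyMapEval F)^[n + s₂] P) + Pl.h ((polyMapEval F)^[n + s₁] P) := by
    intro n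
    rw [ArithDegAux.iterEval_sub hp F hFadd, ← Function.iterate_add_apply,
      ← Function.iterate_add_apply]
    exact ArithDegAux.h_sub_le Pl _ _
  exact ArithDegAux.limsup_rpow_le
    (fun n => Pl.h ((polyMapEval F)^[n] P))
    (fun n => Pl.h ((polyMapEval F)^[n]
      ((polyMapEval F)^[s₂] P - (polyMapEval F)^[s₁] P)))
    hu0 hv0 (Pl.h P + C) ((D : ℝ) + 1) hMnn hE1 huM s₁ s₂ hvle

end
end
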